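/- arXiv:2007.08119 — 5 statements merged into one kernel-verified Lean document; each statement's English description precedes it below -/
import Mathlib

section
/- Let ρ : ℝ → ℝ be continuous on [0,∞), with ρ(x) = 1 for 0 ≤ x ≤ 1, differentiable on (1,∞), and satisfying the delay differential equation x·ρ'(x) + ρ(x−1) = 0 for all x > 1 (so ρ is the Dickman function). Then for all x ≥ 1, ρ(x) ≥ x^{−1.42·x}. -/
open Real Set MeasureTheory intervalIntegral Filter Topology



lemma exp142_gt : (3.84:ℝ) < Real.exp 1.42 := by
  have h1 : (2.7182818283:ℝ) < Real.exp 1 := Real.exp_one_gt_d9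
  have h2 : (1.42:ℝ) ≤ Real.exp 0.42 := by
    have := Real.add_one_le_exp (0.42:ℝ); linarith
  have : Real.exp 1.42 = Real.exp 1 * Real.exp 0.42 := by
    rw [← Real.exp_add]; norm_num
  rw [this]
  nlinarith [Real.exp_pos (0.42:ℝ), Real.exp_pos (1:ℝ)]

lemma log_ge_one_sub_inv {x : ℝ} (hx : 0 < x) : 1 - x⁻¹ ≤ Real.log x := by
  have h := Real.log_le_sub_one_of_pos (x := x⁻¹) (by positivity)
  rw [Real.log_inv] at h
  linarith

lemma mul_log_lb {x : ℝ} (hx : 1 ≤ x) : x - 1 ≤ x * Real.log x := by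
  have hx0 : 0 < x := by linarith
  have h := log_ge_one_sub_inv hx0
  have : x * (1 - x⁻¹) ≤ x * Real.log x := by
    apply mul_le_mul_of_nonneg_left h (by linarith)
  have hxx : x * (1 - x⁻¹) = x - 1 := by field_simp
  linarith [hxx ▸ this]

lemma log_diff_lb {t x : ℝ} (ht : 0 < t) (htx : t ≤ x) :
    x - t ≤ x * (Real.log x - Real.log t) := by
  have hx0 : 0 < x := lt_of_lt_of_le ht htx
  have h := log_ge_one_sub_inv (x := x / t) (by positivity)
  rw [Real.log_div (ne_of_gt hx0) (ne_of_gt ht)] at h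
  have hinv : (x / t)⁻¹ = t / x := by field_simp
  rw [hinv] at h
  have := mul_le_mul_of_nonneg_left h (le_of_lt hx0)
  have hxx : x * (1 - t / x) = x - t := by field_simp
  linarith [hxx ▸ this]




lemma Ekey {u : ℝ} (hu : 1 ≤ u) :
    u * Real.log u + 2*u + 1 ≤ Real.exp (1.42*(Real.log u + 1)) := by
  have hu0 : (0:ℝ) < u := by linarith
  set L := Real.log u with hLdef
  have hL : 0 ≤ L := Real.log_nonneg hu
  have h1 : Real.exp (1.42*(L+1)) = u * Real.exp (0.42*L) * Real.exp 1.42 := by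
    rw [show (1.42:ℝ)*(L+1) = L + (0.42*L + 1.42) by ring, Real.exp_add, Real.exp_add,
      Real.exp_log hu0, mul_assoc]
  have h2 : (1:ℝ) + 0.42*L ≤ Real.exp (0.42*L) := by
    have := Real.add_one_le_exp (0.42*L); linarith
  have h3 : (3.84:ℝ) ≤ Real.exp 1.42 := le_of_lt exp142_gt
  have hexp : u * ((1+0.42*L) * 3.84) ≤ u * (Real.exp (0.42*L) * Real.exp 1.42) := by
    apply mul_le_mul_of_nonneg_left _ (le_of_lt hu0)
    apply mul_le_mul h2 h3 (by norm_num) (le_of_lt (Real.exp_pos _))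
  rw [h1]
  nlinarith [hexp]

lemma Qlem {u : ℝ} (hu : 1 ≤ u) :
    1 + 1.42*(u+1)*(Real.log u + 1) < Real.exp (1.42*(Real.log u + 1)) := by
  set Fq : ℝ → ℝ := fun v => Real.exp (1.42*(Real.log v + 1)) - 1.42*(v+1)*(Real.log v + 1) - 1
    with hFq
  have hderiv : ∀ v : ℝ, 0 < v → HasDerivAt Fq
      (Real.exp (1.42*(Real.log v + 1)) * (1.42*v⁻¹)
        - (1.42*(Real.log v + 1) + 1.42*(v+1)*v⁻¹)) v := by
    intro v hv
    have hl : HasDerivAt Real.log v⁻¹ v := Real.hasDerivAt_log (ne_of_gt hv)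
    have h1 : HasDerivAt (fun w => 1.42*(Real.log w + 1)) (1.42*v⁻¹) v :=
      (hl.add_const 1).const_mul 1.42
    have hE : HasDerivAt (fun w => Real.exp (1.42*(Real.log w + 1)))
        (Real.exp (1.42*(Real.log v + 1)) * (1.42*v⁻¹)) v := h1.exp
    have hf : HasDerivAt (fun w : ℝ => 1.42*(w+1)) 1.42 v := by
      simpa using ((hasDerivAt_id v).add_const 1).const_mul (1.42:ℝ)
    have hg : HasDerivAt (fun w => Real.log w + 1) v⁻¹ v := hl.add_const 1
    have hmul : HasDerivAt (fun w => 1.42*(w+1)*(Real.log w + 1))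
        (1.42*(Real.log v + 1) + 1.42*(v+1)*v⁻¹) v := by
      have := hf.mul hg
      exact this
    exact (hE.sub hmul).sub_const 1
  have hmono : MonotoneOn Fq (Ici 1) := by
    apply monotoneOn_of_deriv_nonneg (convex_Ici 1)
    · intro v hv
      exact (hderiv v (by simp at hv; linarith)).continuousAt.continuousWithinAt
    · intro v hv
      rw [interior_Ici] at hv
      exact (hderiv v (by simp at hv; linarith)).differentiableAt.differentiableWithinAt
    · intro v hv
      rw [interior_Ici] at hv
      have hv1 : (1:ℝ) < v := hv
      have hv0 : (0:ℝ) < v := by linarith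
      rw [(hderiv v hv0).deriv]
      have hE := Ekey (le_of_lt hv1)
      have hkey : (v * Real.log v + 2*v + 1) * (1.42*v⁻¹) ≤
          Real.exp (1.42*(Real.log v + 1)) * (1.42*v⁻¹) := by
        apply mul_le_mul_of_nonneg_right hE (by positivity)
      have hid : (v * Real.log v + 2*v + 1) * (1.42*v⁻¹)
          = 1.42*(Real.log v + 1) + 1.42*(v+1)*v⁻¹ := by
        field_simp; ring
      linarith [hid ▸ hkey]
  have hF1 : 0 < Fq 1 := by
    simp only [hFq, Real.log_one]
    norm_num
    linarith [exp142_gt]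
  have := hmono (by simp : (1:ℝ) ∈ Ici 1) (mem_Ici.mpr hu) hu
  have hpos : 0 < Fq u := lt_of_lt_of_le hF1 this
  simp only [hFq] at hpos
  linarith




-- φ v = 1.42*(1+v) - exp(1.42*v) is antitone on [0,∞)
lemma phi_anti {t s : ℝ} (ht : 0 ≤ t) (hts : t ≤ s) :
    1.42*(1+s) - Real.exp (1.42*s) ≤ 1.42*(1+t) - Real.exp (1.42*t) := by
  have h1 : (1.42*(s-t)) + 1 ≤ Real.exp (1.42*(s-t)) := Real.add_one_le_exp _
  have h2 : Real.exp (1.42*s) = Real.exp (1.42*t) * Real.exp (1.42*(s-t)) := by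
    rw [← Real.exp_add]; ring_nf
  have h3 : (1:ℝ) ≤ Real.exp (1.42*t) := by
    rw [show (1:ℝ) = Real.exp 0 by simp]
    exact Real.exp_le_exp.mpr (by linarith)
  nlinarith [Real.exp_pos (1.42*(s-t))]

lemma hHasDeriv {t : ℝ} (ht : 0 ≤ t) :
    HasDerivAt (fun v => 1 - Real.log (1+v) - Real.exp (-(1.42*v)))
      (1.42*Real.exp (-(1.42*t)) - (1+t)⁻¹) t := by
  have hl : HasDerivAt (fun v : ℝ => Real.log (1+v)) (1+t)⁻¹ t := by
    have : HasDerivAt (fun v : ℝ => 1+v) 1 t := by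
      simpa using (hasDerivAt_id t).const_add (1:ℝ)
    simpa [Function.comp_def] using (Real.hasDerivAt_log (by linarith : (1:ℝ)+t ≠ 0)).comp t this
  have he : HasDerivAt (fun v : ℝ => Real.exp (-(1.42*v))) (-1.42*Real.exp (-(1.42*t))) t := by
    have hi : HasDerivAt (fun v : ℝ => -(1.42*v)) (-1.42) t := by
      have := ((hasDerivAt_id' t).const_mul (1.42:ℝ)).neg; rwa [mul_one] at this
    simpa [mul_comm] using hi.exp
  have := ((hl.const_sub 1).sub he)
  exact this.congr_deriv (by ring)

lemma hlem {u : ℝ} (h0 : 0 ≤ u) (h1 : u ≤ 1) :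
    Real.exp (-(1.42*u)) ≤ 1 - Real.log (1+u) := by
  set h : ℝ → ℝ := fun v => 1 - Real.log (1+v) - Real.exp (-(1.42*v)) with hh
  suffices hs : 0 ≤ h u by
    simp only [hh] at hs; linarith
  have hcont : ∀ v ∈ Icc (0:ℝ) 1, ContinuousWithinAt h (Icc 0 1) v := fun v hv =>
    (hHasDeriv hv.1).continuousAt.continuousWithinAt
  have hderiv_sign : ∀ t : ℝ, 0 ≤ t →
      (0 ≤ 1.42*(1+t) - Real.exp (1.42*t) → 0 ≤ deriv h t) ∧
      (1.42*(1+t) - Real.exp (1.42*t) ≤ 0 → deriv h t ≤ 0) := by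
    intro t ht
    rw [(hHasDeriv ht).deriv]
    have hab : Real.exp (-(1.42*t)) * Real.exp (1.42*t) = 1 := by
      rw [← Real.exp_add]; simp
    have hpt : (0:ℝ) < 1 + t := by linarith
    have hinv : (1+t)⁻¹ * (1+t) = 1 := inv_mul_cancel₀ (ne_of_gt hpt)
    constructor
    · intro hφ
      nlinarith [Real.exp_pos (-(1.42*t)), Real.exp_pos (1.42*t), inv_pos.mpr hpt]
    · intro hφ
      nlinarith [Real.exp_pos (-(1.42*t)), Real.exp_pos (1.42*t), inv_pos.mpr hpt]
  rcases le_or_gt (Real.exp (1.42*u)) (1.42*(1+u)) with hc | hc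
  · -- monotone on [0,u], h 0 = 0
    have hmono : MonotoneOn h (Icc 0 u) := by
      apply monotoneOn_of_deriv_nonneg (convex_Icc 0 u)
      · exact fun v hv => (hHasDeriv hv.1).continuousAt.continuousWithinAt
      · intro v hv
        rw [interior_Icc] at hv
        exact (hHasDeriv (le_of_lt hv.1)).differentiableAt.differentiableWithinAt
      · intro v hv
        rw [interior_Icc] at hv
        apply (hderiv_sign v (le_of_lt hv.1)).1
        have := phi_anti (le_of_lt hv.1) (le_of_lt hv.2)
        linarith
    have h00 : h 0 = 0 := by simp [hh]
    have := hmono (left_mem_Icc.mpr h0) (right_mem_Icc.mpr h0) h0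
    linarith
  · -- antitone on [u,1], h 1 > 0
    have hanti : AntitoneOn h (Icc u 1) := by
      apply antitoneOn_of_deriv_nonpos (convex_Icc u 1)
      · exact fun v hv => (hHasDeriv (le_trans h0 hv.1)).continuousAt.continuousWithinAt
      · intro v hv
        rw [interior_Icc] at hv
        exact (hHasDeriv (le_trans h0 (le_of_lt hv.1))).differentiableAt.differentiableWithinAt
      · intro v hv
        rw [interior_Icc] at hv
        apply (hderiv_sign v (le_trans h0 (le_of_lt hv.1))).2
        have := phi_anti h0 (le_of_lt hv.1)
        linarith
    have hh1 : 0 < h 1 := by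
      simp only [hh]
      have hlog2 : Real.log (1+1) < 0.6931471808 := by
        rw [show (1:ℝ)+1 = 2 by norm_num]; exact Real.log_two_lt_d9
      have hexp : Real.exp (-(1.42*1)) < 0.30685 := by
        rw [Real.exp_neg]
        have h384 : (3.84:ℝ) < Real.exp (1.42*1) := by
          rw [show (1.42:ℝ)*1 = 1.42 by norm_num]; exact exp142_gt
        have := inv_strictAnti₀ (by norm_num : (0:ℝ) < 3.84) h384
        calc (Real.exp (1.42*1))⁻¹ < (3.84:ℝ)⁻¹ := this
          _ < 0.30685 := by norm_num
      linarith
    have := hanti (left_mem_Icc.mpr h1) (right_mem_Icc.mpr h1) h1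
    linarith



variable (ρ : ℝ → ℝ)

lemma rho_eq_on_12
    (hcont : ContinuousOn ρ (Set.Ici 0))
    (hinit : ∀ x : ℝ, 0 ≤ x → x ≤ 1 → ρ x = 1)
    (hdiff : ∀ x : ℝ, 1 < x → DifferentiableAt ℝ ρ x)
    (hdde : ∀ x : ℝ, 1 < x → x * deriv ρ x + ρ (x - 1) = 0) :
    ∀ x ∈ Icc (1:ℝ) 2, ρ x = 1 - Real.log x := by
  intro x hx
  obtain ⟨hx1, hx2⟩ := hx
  have hFcont : ContinuousOn (fun t => ρ t + Real.log t) (Icc 1 x) := by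
    apply ContinuousOn.add
    · exact hcont.mono (fun t ht => by simp at ht ⊢; linarith [ht.1])
    · apply Real.continuousOn_log.mono
      intro t ht; simp at ht ⊢; linarith [ht.1]
  have hderiv : ∀ t ∈ Ioo (1:ℝ) x, HasDerivWithinAt (fun t => ρ t + Real.log t) ((fun _ => (0:ℝ)) t) (Ioi t) t := by
    intro t ht
    have ht1 : (1:ℝ) < t := ht.1
    have ht0 : t ≠ 0 := by linarith
    have hρ : HasDerivAt ρ (deriv ρ t) t := (hdiff t ht1).hasDerivAt
    have hlog : HasDerivAt Real.log t⁻¹ t := Real.hasDerivAt_log ht0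
    have hsum : HasDerivAt (fun t => ρ t + Real.log t) (deriv ρ t + t⁻¹) t := hρ.add hlog
    have hval : deriv ρ t + t⁻¹ = 0 := by
      have h1 := hdde t ht1
      have h2 : ρ (t-1) = 1 := hinit (t-1) (by linarith) (by linarith [ht.2])
      rw [h2] at h1
      have : deriv ρ t = -t⁻¹ := by
        field_simp
        linarith
      rw [this]; ring
    rw [← hval]
    exact hsum.hasDerivWithinAt
  have hint : IntervalIntegrable (fun _ => (0:ℝ)) volume 1 x := intervalIntegrable_const
  have := intervalIntegral.integral_eq_sub_of_hasDeriv_right_of_le hx1 hFcont hderiv hint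
  simp only [intervalIntegral.integral_zero] at this
  have h1 : ρ 1 = 1 := hinit 1 (by norm_num) (by norm_num)
  have hlog1 : Real.log 1 = 0 := Real.log_one
  have : ρ x + Real.log x = 1 := by
    have he : ρ 1 + Real.log 1 = 1 := by rw [h1, hlog1]; ring
    linarith [this]
  linarith

lemma rho_lb_on_12
    (hcont : ContinuousOn ρ (Set.Ici 0))
    (hinit : ∀ x : ℝ, 0 ≤ x → x ≤ 1 → ρ x = 1)
    (hdiff : ∀ x : ℝ, 1 < x → DifferentiableAt ℝ ρ x)
    (hdde : ∀ x : ℝ, 1 < x → x * deriv ρ x + ρ (x - 1) = 0)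
    (hlem : ∀ u : ℝ, 0 ≤ u → u ≤ 1 → Real.exp (-(1.42*u)) ≤ 1 - Real.log (1+u))
    (hmul_log_lb : ∀ x : ℝ, 1 ≤ x → x - 1 ≤ x * Real.log x) :
    ∀ x ∈ Icc (1:ℝ) 2, Real.exp (-(1.42*x) * Real.log x) ≤ ρ x := by
  intro x hx
  obtain ⟨hx1, hx2⟩ := hx
  have heq := rho_eq_on_12 ρ hcont hinit hdiff hdde x ⟨hx1, hx2⟩
  have h1 := hlem (x-1) (by linarith) (by linarith)
  have h2 : (1:ℝ) + (x-1) = x := by ring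
  rw [h2] at h1
  have h3 : -(1.42*x) * Real.log x ≤ -(1.42*(x-1)) := by
    have := hmul_log_lb x hx1
    nlinarith
  have h4 : Real.exp (-(1.42*x) * Real.log x) ≤ Real.exp (-(1.42*(x-1))) :=
    Real.exp_le_exp.mpr h3
  rw [heq]
  linarith

lemma rho_integral_id
    (hcont : ContinuousOn ρ (Set.Ici 0))
    (hinit : ∀ x : ℝ, 0 ≤ x → x ≤ 1 → ρ x = 1)
    (hdiff : ∀ x : ℝ, 1 < x → DifferentiableAt ℝ ρ x)
    (hdde : ∀ x : ℝ, 1 < x → x * deriv ρ x + ρ (x - 1) = 0) :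
    ∀ x : ℝ, 2 ≤ x → x * ρ x = ∫ t in (x-1)..x, ρ t := by
  have hInt : ∀ a b : ℝ, 0 ≤ a → 0 ≤ b → IntervalIntegrable ρ volume a b := by
    intro a b ha hb
    apply ContinuousOn.intervalIntegrable
    apply hcont.mono
    intro t ht
    rcases Set.mem_uIcc.mp ht with h | h
    · exact le_trans ha h.1
    · exact le_trans hb h.1
  set G : ℝ → ℝ := fun y => ∫ t in (1:ℝ)..y, ρ t with hG
  have hGderiv : ∀ y : ℝ, 0 < y → HasDerivAt G (ρ y) y := by
    intro y hy
    apply intervalIntegral.integral_hasDerivAt_right (hInt 1 y (by norm_num) (le_of_lt hy))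
    · exact ContinuousOn.stronglyMeasurableAtFilter isOpen_Ioi
        (hcont.mono (fun t ht => le_of_lt ht)) y hy
    · exact hcont.continuousAt (Ici_mem_nhds hy)
  intro x hx2
  set F : ℝ → ℝ := fun y => y * ρ y - (G y - G (y-1)) with hF
  have hFderiv : ∀ t : ℝ, 2 ≤ t → HasDerivAt F 0 t := by
    intro t ht
    have ht1 : (1:ℝ) < t := by linarith
    have ht0 : (0:ℝ) < t := by linarith
    have htm : (0:ℝ) < t - 1 := by linarith
    have hρ : HasDerivAt ρ (deriv ρ t) t := (hdiff t ht1).hasDerivAt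
    have hmul : HasDerivAt (fun y => y * ρ y) (1 * ρ t + t * deriv ρ t) t :=
      (hasDerivAt_id t).mul hρ
    have hG1 : HasDerivAt G (ρ t) t := hGderiv t ht0
    have hG2 : HasDerivAt (fun y => G (y-1)) (ρ (t-1)) t := by
      have hin : HasDerivAt (fun y : ℝ => y - 1) 1 t := (hasDerivAt_id t).sub_const 1
      simpa [Function.comp_def] using (hGderiv (t-1) htm).comp t hin
    have := hmul.sub (hG1.sub hG2)
    refine this.congr_deriv ?_
    have := hdde t ht1
    linarith
  have hFcont : ContinuousOn F (Icc 2 x) :=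
    fun t ht => (hFderiv t ht.1).continuousAt.continuousWithinAt
  have hder : ∀ t ∈ Ioo (2:ℝ) x, HasDerivWithinAt F ((fun _ => (0:ℝ)) t) (Ioi t) t :=
    fun t ht => (hFderiv t (le_of_lt ht.1)).hasDerivWithinAt
  have hint0 : IntervalIntegrable (fun _ => (0:ℝ)) volume 2 x := intervalIntegrable_const
  have hFTC := intervalIntegral.integral_eq_sub_of_hasDeriv_right_of_le hx2 hFcont hder hint0
  simp only [intervalIntegral.integral_zero] at hFTC
  -- F 2 = 0
  have hρ2 : ρ 2 = 1 - Real.log 2 :=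
    rho_eq_on_12 ρ hcont hinit hdiff hdde 2 ⟨by norm_num, by norm_num⟩
  have hintlog : IntervalIntegrable Real.log volume 1 2 := by
    apply ContinuousOn.intervalIntegrable
    apply Real.continuousOn_log.mono
    intro t ht
    rcases Set.mem_uIcc.mp ht with h | h <;> simp <;> nlinarith [h.1]
  have hEq12 : ∫ t in (1:ℝ)..2, ρ t = ∫ t in (1:ℝ)..2, (1 - Real.log t) := by
    apply intervalIntegral.integral_congr
    intro t ht
    rw [Set.uIcc_of_le (by norm_num : (1:ℝ) ≤ 2)] at ht
    exact rho_eq_on_12 ρ hcont hinit hdiff hdde t ht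
  have hval12 : ∫ t in (1:ℝ)..2, (1 - Real.log t) = 2 - 2 * Real.log 2 := by
    rw [intervalIntegral.integral_sub intervalIntegrable_const hintlog]
    rw [integral_log]
    simp
    ring
  have hF2 : F 2 = 0 := by
    simp only [hF, hG]
    have h21 : (2:ℝ) - 1 = 1 := by norm_num
    rw [h21, intervalIntegral.integral_same, hEq12, hval12, hρ2]
    ring
  have hFx : F x = 0 := by linarith [hFTC, hF2]
  -- conclude
  have hadj : (∫ t in (1:ℝ)..(x-1), ρ t) + (∫ t in (x-1)..x, ρ t) = ∫ t in (1:ℝ)..x, ρ t :=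
    intervalIntegral.integral_add_adjacent_intervals
      (hInt 1 (x-1) (by norm_num) (by linarith))
      (hInt (x-1) x (by linarith) (by linarith))
  simp only [hF, hG] at hFx
  linarith [hadj, hFx]




lemma g_contOn {a b : ℝ} (ha : 0 < a) (hab : a ≤ b) :
    ContinuousOn (fun t => Real.exp (-(1.42*t) * Real.log t)) (Set.uIcc a b) := by
  apply Real.continuous_exp.comp_continuousOn
  apply ContinuousOn.mul
  · exact (continuous_const.mul continuous_id).neg.continuousOn
  · apply Real.continuousOn_log.mono
    intro t ht
    rw [Set.uIcc_of_le hab] at ht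
    simp
    nlinarith [ht.1]

lemma Dlem {x : ℝ} (hx : 2 ≤ x) :
    x * Real.exp (-(1.42*x) * Real.log x) <
      ∫ t in (x-1)..x, Real.exp (-(1.42*t) * Real.log t) := by
  set gx := Real.exp (-(1.42*x) * Real.log x) with hgx
  set m := 1.42*(Real.log (x-1) + 1) with hm
  have hx1 : (1:ℝ) ≤ x - 1 := by linarith
  have hx0 : (0:ℝ) < x := by linarith
  have hlogx1 : 0 ≤ Real.log (x-1) := Real.log_nonneg hx1
  have hm0 : 0 < m := by rw [hm]; linarith
  have hgx0 : 0 < gx := Real.exp_pos _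
  -- pointwise lower bound
  have hpt : ∀ t ∈ Icc (x-1) x,
      gx * Real.exp (m*(x-t)) ≤ Real.exp (-(1.42*t) * Real.log t) := by
    intro t ht
    obtain ⟨ht1, ht2⟩ := ht
    have ht0 : (0:ℝ) < t := by linarith
    rw [hgx, ← Real.exp_add, Real.exp_le_exp]
    have hd := log_diff_lb ht0 ht2
    have hlt : Real.log (x-1) ≤ Real.log t := Real.log_le_log (by linarith) ht1
    have hxt : 0 ≤ x - t := by linarith
    rw [hm]
    nlinarith [mul_nonneg hxt (sub_nonneg.mpr hlt)]
  -- exact integral of the exponential lower bound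
  have hexact : ∫ t in (x-1)..x, gx * Real.exp (m*(x-t))
      = gx * ((Real.exp m - 1)/m) := by
    have hD : ∀ t ∈ Set.uIcc (x-1) x,
        HasDerivAt (fun t => gx * (-(1/m) * Real.exp (m*(x-t))))
          (gx * Real.exp (m*(x-t))) t := by
      intro t _
      have hin : HasDerivAt (fun t : ℝ => m*(x-t)) (-m) t := by
        have : HasDerivAt (fun t : ℝ => x - t) (-1) t := (hasDerivAt_id t).const_sub x
        have := this.const_mul m
        exact this.congr_deriv (by ring)
      have hexp : HasDerivAt (fun t => Real.exp (m*(x-t)))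
          (Real.exp (m*(x-t)) * (-m)) t := hin.exp
      have := (hexp.const_mul (-(1/m))).const_mul gx
      exact this.congr_deriv (by field_simp)
    have hci : IntervalIntegrable (fun t => gx * Real.exp (m*(x-t))) volume (x-1) x := by
      apply Continuous.intervalIntegrable
      exact continuous_const.mul (Real.continuous_exp.comp
        (continuous_const.mul (continuous_const.sub continuous_id)))
    rw [intervalIntegral.integral_eq_sub_of_hasDerivAt hD hci]
    have h1 : m*(x-x) = 0 := by ring
    have h2 : m*(x-(x-1)) = m := by ring
    rw [h1, h2]
    simp [Real.exp_zero]
    field_simp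
    ring
  -- integral monotonicity
  have hmono : ∫ t in (x-1)..x, gx * Real.exp (m*(x-t))
      ≤ ∫ t in (x-1)..x, Real.exp (-(1.42*t) * Real.log t) := by
    apply intervalIntegral.integral_mono_on (by linarith)
    · apply Continuous.intervalIntegrable
      exact continuous_const.mul (Real.continuous_exp.comp
        (continuous_const.mul (continuous_const.sub continuous_id)))
    · exact (g_contOn (by linarith) (by linarith)).intervalIntegrable
    · exact hpt
  -- numeric step from Qlem
  have hq := Qlem hx1
  have hq' : 1 + x * m < Real.exp m := by
    rw [hm]
    have : (x - 1 + 1) = x := by ring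
    calc 1 + x * (1.42*(Real.log (x-1) + 1))
        = 1 + 1.42*((x-1)+1)*(Real.log (x-1) + 1) := by ring
      _ < Real.exp (1.42*(Real.log (x-1) + 1)) := hq
  have hfin : x * gx < gx * ((Real.exp m - 1)/m) := by
    rw [div_eq_mul_inv]
    have h1 : x * m < Real.exp m - 1 := by linarith
    have h2 : x < (Real.exp m - 1) * m⁻¹ := by
      rw [← div_eq_mul_inv, lt_div_iff₀ hm0]
      linarith
    nlinarith
  linarith [hexact ▸ hmono]




/-- Explicit lower bound for the Dickman function: `ρ(x) ≥ x^{−1.42 x}` for `x ≥ 1`. -/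
theorem dickman_lower_bound (ρ : ℝ → ℝ)
    (hcont : ContinuousOn ρ (Set.Ici 0))
    (hinit : ∀ x : ℝ, 0 ≤ x → x ≤ 1 → ρ x = 1)
    (hdiff : ∀ x : ℝ, 1 < x → DifferentiableAt ℝ ρ x)
    (hdde : ∀ x : ℝ, 1 < x → x * deriv ρ x + ρ (x - 1) = 0) :
    ∀ x : ℝ, 1 ≤ x → ρ x ≥ x ^ (-(1.42 * x)) := by
  set g : ℝ → ℝ := fun t => Real.exp (-(1.42*t) * Real.log t) with hg
  have main : ∀ x : ℝ, 1 ≤ x → g x ≤ ρ x := by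
    by_contra hmain
    push_neg at hmain
    obtain ⟨z, hz1, hzlt⟩ := hmain
    set T : Set ℝ := {y | 1 ≤ y ∧ ρ y < g y} with hT
    have hne : T.Nonempty := ⟨z, hz1, hzlt⟩
    have hbdd : BddBelow T := ⟨1, fun y hy => hy.1⟩
    have hT2 : ∀ y ∈ T, (2:ℝ) ≤ y := by
      intro y hy
      by_contra hy2
      push_neg at hy2
      exact absurd (rho_lb_on_12 ρ hcont hinit hdiff hdde (fun u h0 h1 => hlem h0 h1) (fun v hv => mul_log_lb hv) y ⟨hy.1, le_of_lt hy2⟩) (not_le.mpr hy.2)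
    set c := sInf T with hc
    have hc2 : (2:ℝ) ≤ c := le_csInf hne hT2
    have hc0 : (0:ℝ) < c := by linarith
    have hlb : ∀ y : ℝ, 1 ≤ y → y < c → g y ≤ ρ y := by
      intro y hy1 hyc
      by_contra hcon
      push_neg at hcon
      exact absurd (csInf_le hbdd ⟨hy1, hcon⟩) (not_le.mpr hyc)
    have hgc : ContinuousAt g c := by
      apply Real.continuous_exp.continuousAt.comp
      exact ((continuous_const.mul continuous_id).neg.continuousAt.mul
        (Real.continuousAt_log (ne_of_gt hc0)))
    have hρc : ContinuousAt ρ c := hcont.continuousAt (Ici_mem_nhds hc0)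
    -- ρ c ≤ g c from closure membership
    have hub : ρ c ≤ g c := by
      by_contra hcon
      push_neg at hcon
      have hev : ∀ᶠ y in 𝓝 c, g y < ρ y := ContinuousAt.eventually_lt hgc hρc hcon
      have hclosure : c ∈ closure T := csInf_mem_closure hne hbdd
      rcases mem_closure_iff_nhds.mp hclosure _ hev with ⟨y, hy1, hy2⟩
      exact absurd hy2.2 (not_lt.mpr (le_of_lt hy1))
    -- g c ≤ ρ c from left limit
    have hge : g c ≤ ρ c := by
      have htend : Tendsto (fun y => ρ y - g y) (𝓝[<] c) (𝓝 (ρ c - g c)) :=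
        ((hρc.sub hgc).tendsto).mono_left nhdsWithin_le_nhds
      have hev : ∀ᶠ y in 𝓝[<] c, (0:ℝ) ≤ ρ y - g y := by
        filter_upwards [Ioo_mem_nhdsLT_of_mem (⟨by linarith, le_refl c⟩ : c ∈ Ioc (c-1) c)]
          with y hy
        have := hlb y (by linarith [hy.1]) hy.2
        linarith
      have := ge_of_tendsto htend hev
      linarith
    -- pointwise on Icc (c-1) c
    have hpt : ∀ t ∈ Icc (c-1) c, g t ≤ ρ t := by
      intro t ht
      rcases lt_or_eq_of_le ht.2 with h | h
      · exact hlb t (by linarith [ht.1]) h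
      · rw [h]; exact hge
    have hρint : IntervalIntegrable ρ volume (c-1) c := by
      apply ContinuousOn.intervalIntegrable
      apply hcont.mono
      intro t ht
      rw [Set.uIcc_of_le (by linarith : c - 1 ≤ c)] at ht
      simp; linarith [ht.1]
    have hgint : IntervalIntegrable g volume (c-1) c :=
      (g_contOn (by linarith : (0:ℝ) < c - 1) (by linarith)).intervalIntegrable
    have hmono : ∫ t in (c-1)..c, g t ≤ ∫ t in (c-1)..c, ρ t :=
      intervalIntegral.integral_mono_on (by linarith) hgint hρint hpt
    have hid := rho_integral_id ρ hcont hinit hdiff hdde c hc2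
    have hD := Dlem hc2
    have hfinal : c * ρ c ≤ c * g c :=
      mul_le_mul_of_nonneg_left hub (le_of_lt hc0)
    simp only [hg] at hD hmono hid hfinal
    linarith
  intro x hx
  have hx0 : (0:ℝ) < x := by linarith
  have := main x hx
  rw [ge_iff_le, Real.rpow_def_of_pos hx0]
  rw [show Real.log x * -(1.42 * x) = -(1.42*x) * Real.log x by ring]
  exact this
end

section
/- For every complex number s with Re(s) > 1, |ζ'(s) + 1/(s−1)²| ≤ (1 + |s|)/2, where ζ' is the derivative of the Riemann zeta function. -/
open MeasureTheory Filter Set intervalIntegral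

namespace ZDB

noncomputable def g (s : ℂ) (t : ℝ) : ℂ := (t : ℂ) ^ (-s) * Real.log t
noncomputable def g' (s : ℂ) (t : ℝ) : ℂ := (t : ℂ) ^ (-s - 1) * (1 - s * Real.log t)
noncomputable def F (s : ℂ) (t : ℝ) : ℂ :=
  (t : ℂ) ^ (1 - s) * (Real.log t * (1 - s)⁻¹ - ((1 - s) ^ 2)⁻¹)
noncomputable def P (s : ℂ) (t : ℝ) : ℝ := t ^ (-s.re - 1) * (1 + ‖s‖ * Real.log t)
noncomputable def h (s : ℂ) (t : ℝ) : ℝ :=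
  -(t ^ (-s.re) / s.re) -
    ‖s‖ * (t ^ (-s.re) * Real.log t / s.re + t ^ (-s.re) / s.re ^ 2)

variable {s : ℂ} {t : ℝ}

lemma hasDerivAt_cpow_neg (h0 : s ≠ 0) (ht : 0 < t) :
    HasDerivAt (fun y : ℝ ↦ (y : ℂ) ^ (-s)) (-s * (t : ℂ) ^ (-s - 1)) t := by
  have hr : -s - 1 ≠ -1 := fun h ↦ h0 (by linear_combination -h)
  have H := (hasDerivAt_ofReal_cpow_const' (ne_of_gt ht) hr).const_mul (-s)
  rw [show -s - 1 + 1 = -s by ring] at H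
  exact H.congr_of_eventuallyEq (Eventually.of_forall fun y ↦ by field_simp)

lemma hasDerivAt_g (hs : 1 < s.re) (ht : 0 < t) : HasDerivAt (g s) (g' s t) t := by
  have h0 : s ≠ 0 := fun h ↦ by simp [h] at hs; linarith
  have ht0 : (t : ℂ) ≠ 0 := by exact_mod_cast ht.ne'
  have H := (hasDerivAt_cpow_neg h0 ht).mul ((Real.hasDerivAt_log ht.ne').ofReal_comp)
  have key : (t : ℂ) ^ (-s - 1) = (t : ℂ) ^ (-s) * (t : ℂ)⁻¹ := by
    rw [sub_eq_add_neg, Complex.cpow_add _ _ ht0, Complex.cpow_neg_one]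
  refine H.congr_deriv (Eq.symm ?_)
  unfold g'
  rw [key]
  push_cast
  ring

lemma hasDerivAt_F (hs : 1 < s.re) (ht : 0 < t) : HasDerivAt (F s) (g s t) t := by
  have h1s : (1 : ℂ) - s ≠ 0 := by
    intro h
    have : s = 1 := by linear_combination -h
    simp [this] at hs
  have ht0 : (t : ℂ) ≠ 0 := by exact_mod_cast ht.ne'
  have hr : -s ≠ -1 := fun h ↦ h1s (by linear_combination h)
  have H := (hasDerivAt_ofReal_cpow_const' (ne_of_gt ht) hr).const_mul (1 - s)
  rw [show -s + 1 = 1 - s by ring] at H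
  have H1 : HasDerivAt (fun y : ℝ ↦ (y : ℂ) ^ (1 - s)) ((1 - s) * (t : ℂ) ^ (-s)) t :=
    H.congr_of_eventuallyEq (Eventually.of_forall fun y ↦ by field_simp)
  have H2 : HasDerivAt (fun y : ℝ ↦ ((Real.log y : ℂ) * (1 - s)⁻¹ - ((1 - s) ^ 2)⁻¹))
      ((t⁻¹ : ℝ) * (1 - s)⁻¹) t :=
    (((Real.hasDerivAt_log ht.ne').ofReal_comp).mul_const _).sub_const _
  have key : (t : ℂ) ^ (1 - s) = (t : ℂ) ^ (-s) * t := by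
    rw [show (1 : ℂ) - s = -s + 1 by ring, Complex.cpow_add _ _ ht0, Complex.cpow_one]
  have := H1.mul H2
  refine this.congr_deriv (Eq.symm ?_)
  unfold g
  rw [key]
  push_cast
  field_simp
  ring

lemma hasDerivAt_h (hs : 1 < s.re) (ht : 0 < t) : HasDerivAt (h s) (P s t) t := by
  have hσ : s.re ≠ 0 := by positivity
  have hrp : HasDerivAt (fun x : ℝ ↦ x ^ (-s.re)) (-s.re * t ^ (-s.re - 1)) t :=
    Real.hasDerivAt_rpow_const (Or.inl ht.ne')
  have H1 := (hrp.div_const s.re).neg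
  have H2 := ((hrp.mul (Real.hasDerivAt_log ht.ne')).div_const s.re).add
    (hrp.div_const (s.re ^ 2))
  have H := H1.sub ((H2).const_mul (‖s‖))
  refine H.congr_deriv (Eq.symm ?_)
  have key : t ^ (-s.re) * t⁻¹ = t ^ (-s.re - 1) := by
    rw [Real.rpow_sub ht, Real.rpow_one, div_eq_mul_inv]
  have key2 : t ^ (-s.re - 1) * t = t ^ (-s.re) := by
    rw [← key]; field_simp
  unfold P
  field_simp
  linear_combination (-‖s‖) * key2

lemma norm_g'_le (ht : 1 ≤ t) : ‖g' s t‖ ≤ P s t := by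
  have ht0 : (0:ℝ) < t := lt_of_lt_of_le one_pos ht
  have hlog : 0 ≤ Real.log t := Real.log_nonneg ht
  unfold g' P
  rw [norm_mul, Complex.norm_cpow_eq_rpow_re_of_pos ht0]
  have h1 : ((-s - 1).re) = -s.re - 1 := by simp
  rw [h1]
  refine mul_le_mul_of_nonneg_left ?_ (Real.rpow_nonneg ht0.le _)
  calc ‖1 - s * Real.log t‖ ≤ ‖(1:ℂ)‖ + ‖s * Real.log t‖ := norm_sub_le _ _
    _ = 1 + ‖s‖ * Real.log t := by
        rw [norm_one, norm_mul, Complex.norm_real, Real.norm_eq_abs, abs_of_nonneg hlog]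

lemma continuousOn_ofReal_cpow_Ici (c : ℂ) :
    ContinuousOn (fun t : ℝ ↦ (t : ℂ) ^ c) (Ici (1:ℝ)) := fun x hx ↦
  (Complex.continuousAt_ofReal_cpow_const _ _
    (Or.inr (lt_of_lt_of_le one_pos hx).ne')).continuousWithinAt

lemma continuousOn_g : ContinuousOn (g s) (Ici (1:ℝ)) := by
  apply (continuousOn_ofReal_cpow_Ici (-s)).mul
  exact Complex.continuous_ofReal.comp_continuousOn
    (Real.continuousOn_log.mono (fun x hx ↦ by simpa using (lt_of_lt_of_le one_pos hx).ne'))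

lemma continuousOn_g' : ContinuousOn (g' s) (Ici (1:ℝ)) := by
  apply (continuousOn_ofReal_cpow_Ici (-s - 1)).mul
  apply ContinuousOn.sub continuousOn_const
  apply ContinuousOn.mul continuousOn_const
  exact Complex.continuous_ofReal.comp_continuousOn
    (Real.continuousOn_log.mono (fun x hx ↦ by simpa using (lt_of_lt_of_le one_pos hx).ne'))

lemma continuousOn_P : ContinuousOn (P s) (Ici (1:ℝ)) := by
  apply ContinuousOn.mul
  · exact fun x hx ↦ (Real.continuousAt_rpow_const _ _
      (Or.inl (lt_of_lt_of_le one_pos hx).ne')).continuousWithinAt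
  · exact ContinuousOn.add continuousOn_const (ContinuousOn.mul continuousOn_const
      (Real.continuousOn_log.mono (fun x hx ↦ by simpa using (lt_of_lt_of_le one_pos hx).ne')))

lemma trapezoid (hs : 1 < s.re) {n : ℝ} (hn : 1 ≤ n) :
    ‖(g s n + g s (n+1))/2 - ∫ t in n..(n+1), g s t‖ ≤ (h s (n+1) - h s n)/2 := by
  have hle : n ≤ n + 1 := by linarith
  have huIcc : uIcc n (n+1) = Icc n (n+1) := uIcc_of_le hle
  have hsub : Icc n (n+1) ⊆ Ici (1:ℝ) := fun x hx ↦ le_trans hn hx.1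
  have hsub' : uIcc n (n+1) ⊆ Ici (1:ℝ) := huIcc ▸ hsub
  set u : ℝ → ℂ := fun t ↦ (n:ℂ) + 1/2 - (t:ℂ) with hu_def
  have hu : ∀ x ∈ uIcc n (n+1), HasDerivAt u (-1 : ℂ) x := fun x _ ↦ by
    simpa [hu_def, one_div] using
      (HasDerivAt.ofReal_comp (hasDerivAt_id x)).const_sub ((n:ℂ) + 1/2)
  have hv : ∀ x ∈ uIcc n (n+1), HasDerivAt (g s) (g' s x) x := fun x hx ↦
    hasDerivAt_g hs (lt_of_lt_of_le one_pos (hsub' hx))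
  have hgint : IntervalIntegrable (g s) volume n (n+1) :=
    (continuousOn_g.mono hsub').intervalIntegrable
  have hg'int : IntervalIntegrable (g' s) volume n (n+1) :=
    (continuousOn_g'.mono hsub').intervalIntegrable
  have IBP := intervalIntegral.integral_mul_deriv_eq_deriv_mul hu hv
    (intervalIntegrable_const) hg'int
  have e1 : u (n+1) = -(1/2) := by simp only [hu_def]; push_cast; ring
  have e2 : u n = 1/2 := by simp only [hu_def]; ring
  have e3 : (∫ t in n..(n+1), (-1 : ℂ) * g s t) = -∫ t in n..(n+1), g s t := by
    simp [neg_one_mul, intervalIntegral.integral_neg]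
  rw [e1, e2, e3] at IBP
  have key : (g s n + g s (n+1))/2 - ∫ t in n..(n+1), g s t
      = -∫ t in n..(n+1), u t * g' s t := by linear_combination IBP
  rw [key, norm_neg]
  have hP : ∀ x ∈ Icc n (n+1), ‖u x * g' s x‖ ≤ P s x / 2 := by
    intro x hx
    have hx1 : (1:ℝ) ≤ x := hsub hx
    have h1 : ‖u x‖ ≤ 1/2 := by
      have : u x = ((n + 1/2 - x : ℝ) : ℂ) := by simp only [hu_def]; push_cast; ring
      rw [this, Complex.norm_real]
      rw [Real.norm_eq_abs, abs_le]
      constructor <;> [linarith [hx.2]; linarith [hx.1]]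
    have h2 : ‖g' s x‖ ≤ P s x := norm_g'_le hx1
    have h0 : (0:ℝ) ≤ P s x := le_trans (norm_nonneg _) h2
    calc ‖u x * g' s x‖ = ‖u x‖ * ‖g' s x‖ := norm_mul _ _
      _ ≤ (1/2) * P s x := mul_le_mul h1 h2 (norm_nonneg _) (by norm_num)
      _ = P s x / 2 := by ring
  have hPint : IntervalIntegrable (P s) volume n (n+1) :=
    (continuousOn_P.mono hsub').intervalIntegrable
  calc ‖∫ t in n..(n+1), u t * g' s t‖ ≤ ∫ t in n..(n+1), ‖u t * g' s t‖ :=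
        intervalIntegral.norm_integral_le_integral_norm hle
    _ ≤ ∫ t in n..(n+1), P s t / 2 := by
        refine intervalIntegral.integral_mono_on hle ?_ (hPint.div_const 2) hP
        exact (((continuous_const.sub Complex.continuous_ofReal).continuousOn.mul
          (continuousOn_g'.mono hsub')).norm).intervalIntegrable
    _ = (∫ t in n..(n+1), P s t) / 2 := by
        rw [intervalIntegral.integral_div]
    _ = (h s (n+1) - h s n)/2 := by
        rw [intervalIntegral.integral_eq_sub_of_hasDerivAt
          (fun x hx ↦ hasDerivAt_h hs (lt_of_lt_of_le one_pos (hsub' hx))) hPint]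

lemma g_one : g s 1 = 0 := by simp [g]
lemma g_zero : g s 0 = 0 := by simp [g]

lemma main_bound (hs : 1 < s.re) (N : ℕ) (hN : 1 ≤ N) :
    ‖(∑ n ∈ Finset.range (N+1), g s n) - g s N / 2 - (F s N - F s 1)‖
      ≤ (h s N - h s 1)/2 := by
  induction N, hN using Nat.le_induction with
  | base => simp [Finset.sum_range_succ, g_one, g_zero]
  | succ N hN ih =>
    have hN1 : (1:ℝ) ≤ (N:ℝ) := by exact_mod_cast hN
    have hle : (N:ℝ) ≤ N + 1 := by linarith
    have hsub' : uIcc (N:ℝ) (N+1) ⊆ Ici (1:ℝ) := by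
      rw [uIcc_of_le hle]; exact fun x hx ↦ le_trans hN1 hx.1
    have hgint : IntervalIntegrable (g s) volume N (N+1) :=
      (continuousOn_g.mono hsub').intervalIntegrable
    have FTC : (∫ t in (N:ℝ)..(N+1), g s t) = F s (N+1) - F s N :=
      intervalIntegral.integral_eq_sub_of_hasDerivAt
        (fun x hx ↦ hasDerivAt_F hs (lt_of_lt_of_le one_pos (hsub' hx))) hgint
    have T := trapezoid hs (n := (N:ℝ)) hN1
    rw [FTC] at T
    have cast1 : ((N+1 : ℕ) : ℝ) = (N:ℝ) + 1 := by push_cast; ring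
    have decomp : (∑ n ∈ Finset.range (N+1+1), g s n) - g s ((N+1:ℕ):ℝ) / 2
          - (F s ((N+1:ℕ):ℝ) - F s 1)
        = ((∑ n ∈ Finset.range (N+1), g s n) - g s N / 2 - (F s N - F s 1))
          + ((g s N + g s ((N:ℝ)+1))/2 - (F s ((N:ℝ)+1) - F s N)) := by
      rw [Finset.sum_range_succ, cast1]; ring
    rw [decomp]
    calc ‖_ + _‖ ≤ ‖_‖ + ‖_‖ := norm_add_le _ _
      _ ≤ (h s N - h s 1)/2 + (h s ((N:ℝ)+1) - h s N)/2 := add_le_add ih T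
      _ = (h s ((N+1:ℕ):ℝ) - h s 1)/2 := by rw [cast1]; ring

lemma h_bound (hs : 1 < s.re) (ht : 1 ≤ t) : (h s t - h s 1)/2 ≤ (1 + ‖s‖)/2 := by
  have hσ : (0:ℝ) < s.re := by linarith
  have ht0 : (0:ℝ) < t := lt_of_lt_of_le one_pos ht
  have hlog : 0 ≤ Real.log t := Real.log_nonneg ht
  have htr : (0:ℝ) < t ^ (-s.re) := Real.rpow_pos_of_pos ht0 _
  have h1 : h s 1 = -(1/s.re) - ‖s‖ * (1/s.re^2) := by
    simp [h, Real.one_rpow]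
  have h2 : h s t ≤ 0 := by
    have ha : 0 ≤ ‖s‖ * (t ^ (-s.re) * Real.log t / s.re + t ^ (-s.re) / s.re ^ 2) := by
      positivity
    have hb : 0 ≤ t ^ (-s.re) / s.re := by positivity
    unfold h; nlinarith [ha, hb]
  have h3 : 1/s.re ≤ 1 := by
    rw [div_le_one hσ]; linarith
  have h4 : 1/s.re^2 ≤ 1 := by
    rw [div_le_one (by positivity)]; nlinarith
  have h5 : (0:ℝ) ≤ ‖s‖ := norm_nonneg _
  rw [h1]
  nlinarith [h2, h5, mul_le_mul_of_nonneg_left h4 h5]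

lemma term_eq (n : ℕ) : LSeries.term (LSeries.logMul 1) s n = g s n := by
  rcases Nat.eq_zero_or_pos n with rfl | hn
  · simp [g]
  · have hn' : (0:ℝ) < n := by exact_mod_cast hn
    rw [LSeries.term_of_ne_zero hn.ne']
    simp only [LSeries.logMul, Pi.one_apply, mul_one]
    rw [g, ← Complex.ofReal_natCast, ← Complex.ofReal_log hn'.le]
    rw [Complex.cpow_neg]
    ring

lemma F_one : F s 1 = -((1 - s) ^ 2)⁻¹ := by simp [F]

lemma tendsto_F (hs : 1 < s.re) : Filter.Tendsto (fun N : ℕ ↦ F s N) atTop (nhds 0) := by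
  set σ := s.re
  have hσ : (0:ℝ) < σ - 1 := by simp [σ]; linarith
  set a := ‖(1 - s)⁻¹‖
  set b := ‖((1 - s) ^ 2)⁻¹‖
  have hbound : ∀ x : ℝ, 1 ≤ x → ‖F s x‖ ≤ a * (Real.log x * x ^ (1 - σ)) + b * x ^ (1 - σ) := by
    intro x hx
    have hx0 : (0:ℝ) < x := lt_of_lt_of_le one_pos hx
    have hlog : 0 ≤ Real.log x := Real.log_nonneg hx
    rw [F, norm_mul, Complex.norm_cpow_eq_rpow_re_of_pos hx0]
    have hre : ((1:ℂ) - s).re = 1 - σ := by simp [σ]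
    rw [hre]
    have h1 : ‖(Real.log x : ℂ) * (1 - s)⁻¹ - ((1 - s) ^ 2)⁻¹‖ ≤ Real.log x * a + b := by
      calc ‖(Real.log x : ℂ) * (1 - s)⁻¹ - ((1 - s) ^ 2)⁻¹‖
          ≤ ‖(Real.log x : ℂ) * (1 - s)⁻¹‖ + b := norm_sub_le _ _
        _ = Real.log x * a + b := by
            rw [norm_mul, Complex.norm_real, Real.norm_eq_abs, abs_of_nonneg hlog]
    calc x ^ (1 - σ) * ‖(Real.log x : ℂ) * (1 - s)⁻¹ - ((1 - s) ^ 2)⁻¹‖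
        ≤ x ^ (1 - σ) * (Real.log x * a + b) :=
          mul_le_mul_of_nonneg_left h1 (Real.rpow_nonneg hx0.le _)
      _ = a * (Real.log x * x ^ (1 - σ)) + b * x ^ (1 - σ) := by ring
  have t1 : Filter.Tendsto (fun x : ℝ ↦ x ^ (1 - σ)) atTop (nhds 0) := by
    have := tendsto_rpow_neg_atTop hσ
    refine this.congr' ?_
    filter_upwards [eventually_gt_atTop 0] with x hx
    rw [show -(σ - 1) = 1 - σ by ring]
  have t2 : Filter.Tendsto (fun x : ℝ ↦ Real.log x * x ^ (1 - σ)) atTop (nhds 0) := by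
    have hr : (0:ℝ) < (σ - 1)/2 := by linarith
    have hlo := (isLittleO_log_rpow_atTop hr).tendsto_div_nhds_zero
    have hsmall : Filter.Tendsto (fun x : ℝ ↦ x ^ (-((σ - 1)/2))) atTop (nhds 0) :=
      tendsto_rpow_neg_atTop hr
    have := hlo.mul hsmall
    rw [mul_zero] at this
    refine this.congr' ?_
    filter_upwards [eventually_gt_atTop 0] with x hx
    rw [div_eq_mul_inv, ← Real.rpow_neg hx.le, mul_assoc, ← Real.rpow_add hx]
    rw [show -((σ - 1)/2) + -((σ - 1)/2) = 1 - σ by ring]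
  have tmaj : Filter.Tendsto (fun x : ℝ ↦ a * (Real.log x * x ^ (1 - σ)) + b * x ^ (1 - σ))
      atTop (nhds 0) := by
    have := (t2.const_mul a).add (t1.const_mul b)
    simpa using this
  have tmajN : Filter.Tendsto
      (fun N : ℕ ↦ a * (Real.log N * (N:ℝ) ^ (1 - σ)) + b * (N:ℝ) ^ (1 - σ))
      atTop (nhds 0) := tmaj.comp tendsto_natCast_atTop_atTop
  refine squeeze_zero_norm' ?_ tmajN
  filter_upwards [eventually_ge_atTop 1] with N hN
  exact hbound N (by exact_mod_cast hN)

end ZDB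

/-- For every complex number `s` with `Re(s) > 1`,
`|ζ'(s) + 1/(s−1)²| ≤ (1 + |s|)/2`. -/
theorem zeta_deriv_bound (s : ℂ) (hs : 1 < s.re) :
    ‖deriv riemannZeta s + 1 / (s - 1) ^ 2‖ ≤ (1 + ‖s‖) / 2 := by
  have habs : LSeries.abscissaOfAbsConv 1 < s.re := by
    rw [LSeries.abscissaOfAbsConv_one]; exact_mod_cast hs
  have hsum : LSeriesSummable (LSeries.logMul 1) s := LSeriesSummable_logMul_of_lt_re habs
  set L := LSeries (LSeries.logMul 1) s with hL
  have hderiv : deriv riemannZeta s = -L := by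
    have heq : deriv (LSeries 1) s = deriv riemannZeta s := by
      refine Filter.EventuallyEq.deriv_eq ?_
      refine Filter.eventuallyEq_iff_exists_mem.mpr ?_
      exact ⟨{z | 1 < z.re}, (isOpen_lt continuous_const Complex.continuous_re).mem_nhds hs,
        fun _ hz ↦ LSeries_one_eq_riemannZeta hz⟩
    rw [← heq, LSeries_deriv habs]
  have hgsum : Summable (fun n : ℕ ↦ ZDB.g s n) :=
    (summable_congr (fun n ↦ (ZDB.term_eq n).symm)).mpr hsum
  have htsum : (∑' n : ℕ, ZDB.g s n) = L := by
    rw [hL, LSeries]; exact tsum_congr fun n ↦ (ZDB.term_eq n).symm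
  have h1 : HasSum (fun n : ℕ ↦ ZDB.g s n) L := htsum ▸ hgsum.hasSum
  have htend_sum : Filter.Tendsto (fun N : ℕ ↦ ∑ n ∈ Finset.range (N+1), ZDB.g s n)
      atTop (nhds L) := h1.tendsto_sum_nat.comp (tendsto_add_atTop_nat 1)
  have htend_g : Filter.Tendsto (fun N : ℕ ↦ ZDB.g s N) atTop (nhds 0) :=
    hgsum.tendsto_atTop_zero
  have htend_F := ZDB.tendsto_F hs
  have htendD : Filter.Tendsto
      (fun N : ℕ ↦ (∑ n ∈ Finset.range (N+1), ZDB.g s n) - ZDB.g s N / 2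
        - (ZDB.F s N - ZDB.F s 1)) atTop (nhds (L + ZDB.F s 1)) := by
    have := (htend_sum.sub (htend_g.div_const 2)).sub
      (htend_F.sub (tendsto_const_nhds (x := ZDB.F s 1)))
    simpa using this
  have hfinal : ‖L + ZDB.F s 1‖ ≤ (1 + ‖s‖)/2 := by
    refine le_of_tendsto htendD.norm ?_
    filter_upwards [Filter.eventually_ge_atTop 1] with N hN
    calc ‖(∑ n ∈ Finset.range (N+1), ZDB.g s n) - ZDB.g s N / 2 - (ZDB.F s N - ZDB.F s 1)‖
        ≤ (ZDB.h s N - ZDB.h s 1)/2 := ZDB.main_bound hs N hN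
      _ ≤ (1 + ‖s‖)/2 := ZDB.h_bound hs (by exact_mod_cast hN)
  have heq2 : deriv riemannZeta s + 1 / (s - 1) ^ 2 = -(L + ZDB.F s 1) := by
    rw [hderiv, ZDB.F_one]
    have h2 : ((s-1)^2 : ℂ) = (1-s)^2 := by ring
    rw [one_div, h2]
    ring
  rw [heq2, norm_neg]
  exact hfinal
end

section
/- Let x ≥ e² and set α = 2/log x. Then ∫_{√x}^{x} dt/(t^{1−2α}·(log t)²) ≤ 37.8/(α·(log x)²). -/
open Real Set intervalIntegral

noncomputable def Fant (v : ℝ) : ℝ :=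
  Real.exp 3 * ((2559/35840)/v + (29/20) * Real.log v + (-26/5)*v + (22/3)*v^2
    + (-64/9)*v^3 + (16/3)*v^4 + (-512/225)*v^5 + (512/945)*v^6)

noncomputable def gbound (v : ℝ) : ℝ :=
  Real.exp 3 * (((-2559/35840) + (29/20)*v + (-26/5)*v^2 + (44/3)*v^3 + (-64/3)*v^4
    + (64/3)*v^5 + (-512/45)*v^6 + (1024/315)*v^7) / v^2)

lemma hasDerivAt_Fant {v : ℝ} (hv : 0 < v) : HasDerivAt Fant (gbound v) v := by
  have hv' : v ≠ 0 := ne_of_gt hv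
  have hp : HasDerivAt (fun w : ℝ => (-26/5)*w + (22/3)*w^2 + (-64/9)*w^3
      + (16/3)*w^4 + (-512/225)*w^5 + (512/945)*w^6)
      ((-26/5) + (44/3)*v + (-64/3)*v^2 + (64/3)*v^3 + (-512/45)*v^4 + (1024/315)*v^5) v := by
    have h := ((((((hasDerivAt_id v).const_mul ((-26:ℝ)/5)).add
      ((hasDerivAt_pow 2 v).const_mul ((22:ℝ)/3))).add
      ((hasDerivAt_pow 3 v).const_mul ((-64:ℝ)/9))).add
      ((hasDerivAt_pow 4 v).const_mul ((16:ℝ)/3))).add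
      ((hasDerivAt_pow 5 v).const_mul ((-512:ℝ)/225))).add
      ((hasDerivAt_pow 6 v).const_mul ((512:ℝ)/945))
    refine h.congr_deriv ?_
    push_cast; ring
  have h1 : HasDerivAt (fun w : ℝ => (2559/35840) * w⁻¹) ((2559/35840) * (-(v^2)⁻¹)) v :=
    (hasDerivAt_inv hv').const_mul _
  have h2 : HasDerivAt (fun w : ℝ => (29/20) * Real.log w) ((29/20) * v⁻¹) v :=
    (Real.hasDerivAt_log hv').const_mul _
  have h := ((h1.add h2).add hp).const_mul (Real.exp 3)
  have hfun : Fant = fun w : ℝ => Real.exp 3 * ((2559/35840) * w⁻¹ + (29/20) * Real.log w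
      + ((-26/5)*w + (22/3)*w^2 + (-64/9)*w^3 + (16/3)*w^4 + (-512/225)*w^5 + (512/945)*w^6)) := by
    funext w; unfold Fant; ring
  rw [hfun]
  refine h.congr_deriv ?_
  unfold gbound; field_simp; ring

lemma pointwise_bound {v : ℝ} (hv : v ∈ Icc (1/2 : ℝ) 1) :
    Real.exp (4*v) / v^2 ≤ gbound v := by
  obtain ⟨h1, h2⟩ := hv
  have hv0 : (0:ℝ) < v := by linarith
  have habs : |4*v - 3| ≤ 1 := by rw [abs_le]; constructor <;> linarith
  have hb := Real.exp_bound habs (n := 8) (by norm_num)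
  have hpow : |4*v-3|^8 ≤ 1 := pow_le_one₀ (abs_nonneg _) habs
  have hkey : Real.exp (4*v-3) ≤ (-2559/35840) + (29/20)*v + (-26/5)*v^2 + (44/3)*v^3
      + (-64/3)*v^4 + (64/3)*v^5 + (-512/45)*v^6 + (1024/315)*v^7 := by
    have h3 : Real.exp (4*v-3) - ∑ m ∈ Finset.range 8, (4*v-3)^m / m.factorial
        ≤ |4*v-3|^8 * ((8:ℕ).succ / ((8:ℕ).factorial * 8)) := le_trans (le_abs_self _) hb
    have h4 : |4*v-3|^8 * ((8:ℕ).succ / ((8:ℕ).factorial * 8)) ≤ 9/322560 := by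
      have he : ((8:ℕ).succ / ((8:ℕ).factorial * 8) : ℝ) = 9/322560 := by
        norm_num [Nat.factorial]
      rw [he]
      nlinarith [hpow]
    have h5 : ∑ m ∈ Finset.range 8, (4*v-3)^m / (m.factorial : ℝ)
        = (-2559/35840 - 9/322560) + (29/20)*v + (-26/5)*v^2 + (44/3)*v^3
      + (-64/3)*v^4 + (64/3)*v^5 + (-512/45)*v^6 + (1024/315)*v^7 := by
      simp [Finset.sum_range_succ, Nat.factorial]
      ring
    rw [h5] at h3
    linarith
  have hexp : Real.exp (4*v) = Real.exp 3 * Real.exp (4*v-3) := by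
    rw [← Real.exp_add]; ring_nf
  unfold gbound
  rw [hexp, mul_div_assoc]
  apply mul_le_mul_of_nonneg_left _ (Real.exp_pos 3).le
  apply div_le_div_of_nonneg_right ?_ (by positivity)
  exact hkey

lemma core_integral : ∫ v in (1/2:ℝ)..1, Real.exp (4*v) / v^2 ≤ 18.9 := by
  have hle : (1/2:ℝ) ≤ 1 := by norm_num
  have hpos : ∀ v ∈ uIcc (1/2:ℝ) 1, (0:ℝ) < v := by
    intro v hv
    rw [uIcc_of_le hle] at hv
    linarith [hv.1]
  have hc1 : ContinuousOn (fun v : ℝ => Real.exp (4*v) / v^2) (uIcc (1/2:ℝ) 1) := by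
    apply ContinuousOn.div
    · exact (Real.continuous_exp.comp (continuous_const.mul continuous_id)).continuousOn
    · exact (continuous_pow 2).continuousOn
    · intro v hv; exact ne_of_gt (pow_pos (hpos v hv) 2)
  have hc2 : ContinuousOn gbound (uIcc (1/2:ℝ) 1) := by
    apply ContinuousOn.mul continuousOn_const
    apply ContinuousOn.div (by fun_prop) (continuous_pow 2).continuousOn
    intro v hv; exact ne_of_gt (pow_pos (hpos v hv) 2)
  have hint1 : IntervalIntegrable (fun v : ℝ => Real.exp (4*v) / v^2)
      MeasureTheory.volume (1/2) 1 := hc1.intervalIntegrable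
  have hint2 : IntervalIntegrable gbound MeasureTheory.volume (1/2) 1 := hc2.intervalIntegrable
  have hmono : ∫ v in (1/2:ℝ)..1, Real.exp (4*v) / v^2 ≤ ∫ v in (1/2:ℝ)..1, gbound v := by
    apply intervalIntegral.integral_mono_on hle hint1 hint2
    intro v hv; exact pointwise_bound hv
  have heq : ∫ v in (1/2:ℝ)..1, gbound v = Fant 1 - Fant (1/2) := by
    apply intervalIntegral.integral_eq_sub_of_hasDerivAt
    · intro v hv; exact hasDerivAt_Fant (hpos v hv)
    · exact hint2
  rw [heq] at hmono
  refine le_trans hmono ?_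
  unfold Fant
  have hl2 : Real.log (1/2 : ℝ) = -Real.log 2 := by
    rw [one_div, Real.log_inv]
  have he3 : Real.exp 3 < 20.0855369264 := by
    have h1 : Real.exp 3 = Real.exp 1 ^ 3 := by
      rw [← Real.exp_nat_mul]; norm_num
    have h2 : Real.exp 1 ^ 3 < 2.7182818286 ^ 3 :=
      pow_lt_pow_left₀ Real.exp_one_lt_d9 (Real.exp_pos 1).le (by norm_num)
    rw [h1]
    nlinarith [h2]
  have he3p : (0:ℝ) < Real.exp 3 := Real.exp_pos 3
  have hlog2 : Real.log 2 < 0.6931471808 := Real.log_two_lt_d9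
  have hlog2' : (0.6931471803:ℝ) < Real.log 2 := Real.log_two_gt_d9
  rw [hl2]
  simp only [Real.log_one]
  nlinarith [he3, he3p, hlog2, hlog2']

/-- For `x ≥ e²` and `α = 2 / log x`,
`∫_{√x}^{x} dt / (t^{1−2α} (log t)²) ≤ 37.8 / (α (log x)²)`. -/
theorem integral_bound (x α : ℝ) (hx : Real.exp 2 ≤ x) (hα : α = 2 / Real.log x) :
    ∫ t in Real.sqrt x..x, 1 / (t ^ (1 - 2 * α) * (Real.log t) ^ 2) ≤
      37.8 / (α * (Real.log x) ^ 2) := by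
  have hx0 : (0:ℝ) < x := lt_of_lt_of_le (Real.exp_pos 2) hx
  set L := Real.log x with hLdef
  have hL : (2:ℝ) ≤ L := by
    have h := Real.log_le_log (Real.exp_pos 2) hx
    rwa [Real.log_exp] at h
  have hL0 : (0:ℝ) < L := by linarith
  have hL0' : L ≠ 0 := ne_of_gt hL0
  have hαL : α * L = 2 := by rw [hα]; field_simp
  have hxL : x = Real.exp L := (Real.exp_log hx0).symm
  have hsq : Real.sqrt x = Real.exp (L * (1/2)) := by
    rw [show x = Real.exp (L * (1/2)) ^ 2 by rw [sq, ← Real.exp_add]; rw [hxL]; ring_nf]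
    exact Real.sqrt_sq (Real.exp_pos _).le
  have hx1 : x = Real.exp (L * 1) := by rw [mul_one, hxL]
  have hφ : ∀ v ∈ Set.uIcc (1/2:ℝ) 1,
      HasDerivAt (fun v : ℝ => Real.exp (L * v)) (Real.exp (L * v) * L) v := by
    intro v _
    simpa using ((hasDerivAt_id v).const_mul L).exp
  have hφ' : ContinuousOn (fun v : ℝ => Real.exp (L * v) * L) (Set.uIcc (1/2:ℝ) 1) := by
    fun_prop
  have himg : ∀ t ∈ (fun v : ℝ => Real.exp (L * v)) '' Set.uIcc (1/2:ℝ) 1, 1 < t := by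
    rintro t ⟨v, hv, rfl⟩
    rw [Set.uIcc_of_le (by norm_num : (1/2:ℝ) ≤ 1)] at hv
    have : (0:ℝ) < L * v := by nlinarith [hv.1]
    calc (1:ℝ) = Real.exp 0 := Real.exp_zero.symm
    _ < Real.exp (L * v) := Real.exp_lt_exp.mpr this
  have hg : ContinuousOn (fun t : ℝ => 1 / (t ^ (1 - 2 * α) * (Real.log t) ^ 2))
      ((fun v : ℝ => Real.exp (L * v)) '' Set.uIcc (1/2:ℝ) 1) := by
    intro t ht
    have ht1 : 1 < t := himg t ht
    have ht0 : 0 < t := by linarith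
    have hlt : 0 < Real.log t := Real.log_pos ht1
    apply ContinuousAt.continuousWithinAt
    apply ContinuousAt.div continuousAt_const
    · apply ContinuousAt.mul
      · exact Real.continuousAt_rpow_const t _ (Or.inl (ne_of_gt ht0))
      · exact ((Real.continuousAt_log (ne_of_gt ht0)).pow 2)
    · have h1 : (0:ℝ) < t ^ (1 - 2*α) := Real.rpow_pos_of_pos ht0 _
      positivity
  have hsub := intervalIntegral.integral_comp_smul_deriv' hφ hφ' hg
  rw [hsq, hx1, ← hsub]
  have hcongr : Set.EqOn
      (fun v : ℝ => (Real.exp (L * v) * L) •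
        ((fun t : ℝ => 1 / (t ^ (1 - 2 * α) * (Real.log t) ^ 2)) ∘ fun v : ℝ => Real.exp (L * v)) v)
      (fun v : ℝ => (1/L) * (Real.exp (4*v) / v^2)) (Set.uIcc (1/2:ℝ) 1) := by
    intro v hv
    rw [Set.uIcc_of_le (by norm_num : (1/2:ℝ) ≤ 1)] at hv
    have hv0 : (0:ℝ) < v := by linarith [hv.1]
    simp only [Function.comp, smul_eq_mul]
    rw [Real.log_exp, ← Real.exp_mul]
    have hkey : Real.exp (L*v) = Real.exp (4*v) * Real.exp (L*v*(1-2*α)) := by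
      rw [← Real.exp_add]; congr 1; linear_combination 2*v*hαL
    rw [hkey]
    have hE : Real.exp (L*v*(1-2*α)) ≠ 0 := Real.exp_ne_zero _
    field_simp
  rw [intervalIntegral.integral_congr hcongr, intervalIntegral.integral_const_mul]
  have hrhs : 37.8 / (α * L^2) = (1/L) * 18.9 := by
    rw [hα]; field_simp; ring
  rw [hrhs]
  apply mul_le_mul_of_nonneg_left core_integral
  positivity
end

section
/- Let f : ℝ → ℝ be 2π-periodic and of bounded variation on [0, 2π], with total variation V := ∫₀^{2π} |d f(t)| and mean value f̄ := (1/2π)·∫₀^{2π} f(t) dt. Then for all real numbers a, b with 0 < a < b, |∫_a^b (f(t) − f̄)·(1/t) dt| ≤ (π/2)·V/a. -/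
open MeasureTheory intervalIntegral Set Function

lemma BVIB_reduce {f : ℝ → ℝ} (hper : ∀ t : ℝ, f (t + 2 * Real.pi) = f t) (x : ℝ) :
    ∃ y ∈ Set.Ico (0:ℝ) (2 * Real.pi), f x = f y := by
  have hT : (0:ℝ) < 2 * Real.pi := by positivity
  set k : ℤ := ⌊x / (2 * Real.pi)⌋ with hk
  refine ⟨x - k * (2 * Real.pi), ⟨Int.sub_floor_div_mul_nonneg x hT, Int.sub_floor_div_mul_lt x hT⟩, ?_⟩
  have hP : Function.Periodic f (2 * Real.pi) := hper
  exact (hP.sub_int_mul_eq k).symm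

lemma BVIB_integrable {f : ℝ → ℝ} (hper : ∀ t : ℝ, f (t + 2 * Real.pi) = f t)
    (hbv : BoundedVariationOn f (Set.Icc 0 (2 * Real.pi))) :
    ∀ x y : ℝ, IntervalIntegrable f volume x y := by
  have hT : (0:ℝ) < 2 * Real.pi := by positivity
  obtain ⟨p, q, hp, hq, hpq⟩ :=
    hbv.locallyBoundedVariationOn.exists_monotoneOn_sub_monotoneOn
  have h0 : IntervalIntegrable f volume 0 (2 * Real.pi) := by
    have hu : Set.uIcc (0:ℝ) (2 * Real.pi) = Set.Icc 0 (2 * Real.pi) := uIcc_of_le hT.le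
    have h1 : IntervalIntegrable p volume 0 (2 * Real.pi) :=
      (hu ▸ hp : MonotoneOn p (Set.uIcc 0 (2 * Real.pi))).intervalIntegrable
    have h2 : IntervalIntegrable q volume 0 (2 * Real.pi) :=
      (hu ▸ hq : MonotoneOn q (Set.uIcc 0 (2 * Real.pi))).intervalIntegrable
    rw [hpq]; exact h1.sub h2
  have hk : ∀ k : ℤ, IntervalIntegrable f volume (k * (2 * Real.pi)) ((k + 1) * (2 * Real.pi)) := by
    intro k
    have := h0.comp_sub_right (k * (2 * Real.pi))
    have hP : Function.Periodic f (2 * Real.pi) := hper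
    have heq : (fun x => f (x - ↑k * (2 * Real.pi))) = f := by
      funext x
      exact hP.sub_int_mul_eq k
    rw [heq] at this
    have e1 : ((0:ℝ) + ↑k * (2 * Real.pi)) = ↑k * (2 * Real.pi) := by ring
    have e2 : ((2 * Real.pi) + ↑k * (2 * Real.pi)) = (↑k + 1) * (2 * Real.pi) := by ring
    rw [e1, e2] at this
    exact this
  have hn : ∀ n : ℕ, IntervalIntegrable f volume (-(n * (2 * Real.pi))) (n * (2 * Real.pi)) := by
    intro n
    induction n with
    | zero => simp
    | succ n ih =>
      have hr : IntervalIntegrable f volume (n * (2 * Real.pi)) ((n + 1) * (2 * Real.pi)) := by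
        have := hk n; push_cast at this; exact this
      have hl : IntervalIntegrable f volume (-(((n:ℝ) + 1) * (2 * Real.pi))) (-((n:ℝ) * (2 * Real.pi))) := by
        have h := hk (-(n + 1))
        have e1 : (((-(n + 1) : ℤ)):ℝ) * (2 * Real.pi) = -(((n:ℝ) + 1) * (2 * Real.pi)) := by
          push_cast; ring
        have e2 : (((-(n + 1) : ℤ)):ℝ) * (2 * Real.pi) + 1 * (2 * Real.pi) = -((n:ℝ) * (2 * Real.pi)) := by
          push_cast; ring
        have e2' : (((-(n + 1) : ℤ) : ℝ) + 1) * (2 * Real.pi) = -((n:ℝ) * (2 * Real.pi)) := by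
          push_cast; ring
        rw [e1, e2'] at h
        exact h
      push_cast
      exact (hl.trans (ih.trans hr))
  intro x y
  obtain ⟨n, hn'⟩ := exists_nat_ge (max |x| |y| / (2 * Real.pi))
  have hbig : max |x| |y| ≤ n * (2 * Real.pi) := by
    rw [div_le_iff₀ hT] at hn'; exact hn'
  refine (hn n).mono_set (Set.uIcc_subset_uIcc ?_ ?_) <;>
    constructor <;> simp only [inf_le_iff, le_sup_iff, min_le_iff, max_le_iff]
  · left; linarith [neg_abs_le x, le_max_left |x| |y|]
  · right; linarith [le_abs_self x, le_max_left |x| |y|]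
  · left; linarith [neg_abs_le y, le_max_right |x| |y|]
  · right; linarith [le_abs_self y, le_max_right |x| |y|]

lemma BVIB_osc {f : ℝ → ℝ} (hper : ∀ t : ℝ, f (t + 2 * Real.pi) = f t)
    (hbv : BoundedVariationOn f (Set.Icc 0 (2 * Real.pi))) (s t : ℝ) :
    |f s - f t| ≤ (eVariationOn f (Set.Icc 0 (2 * Real.pi))).toReal / 2 := by
  have hT : (0:ℝ) < 2 * Real.pi := by positivity
  have hP : Function.Periodic f (2 * Real.pi) := hper
  -- key claim on fundamental domain, ordered
  have key : ∀ u v : ℝ, u ∈ Set.Icc 0 (2 * Real.pi) → v ∈ Set.Icc 0 (2 * Real.pi) → u ≤ v →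
      |f u - f v| ≤ (eVariationOn f (Set.Icc 0 (2 * Real.pi))).toReal / 2 := by
    intro u v hu hv huv
    have hsub : ∀ x y : ℝ, 0 ≤ x → x ≤ y → y ≤ 2 * Real.pi →
        Set.Icc 0 (2 * Real.pi) ∩ Set.Icc x y = Set.Icc x y := fun x y h1 h2 h3 =>
      Set.inter_eq_self_of_subset_right (Set.Icc_subset_Icc h1 h3)
    have add1 : eVariationOn f (Set.Icc 0 u) + eVariationOn f (Set.Icc u v)
        = eVariationOn f (Set.Icc 0 v) := by
      have := eVariationOn.Icc_add_Icc f (s := Set.Icc 0 (2 * Real.pi)) hu.1 huv hu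
      rwa [hsub 0 u le_rfl hu.1 hu.2, hsub u v hu.1 huv hv.2, hsub 0 v le_rfl hv.1 hv.2] at this
    have add2 : eVariationOn f (Set.Icc 0 v) + eVariationOn f (Set.Icc v (2 * Real.pi))
        = eVariationOn f (Set.Icc 0 (2 * Real.pi)) := by
      have := eVariationOn.Icc_add_Icc f (s := Set.Icc 0 (2 * Real.pi)) hv.1 hv.2 hv
      rwa [hsub 0 v le_rfl hv.1 hv.2, hsub v (2 * Real.pi) hv.1 hv.2 le_rfl,
        hsub 0 (2 * Real.pi) le_rfl hT.le le_rfl] at this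
    have h1 : edist (f u) (f v) ≤ eVariationOn f (Set.Icc u v) :=
      eVariationOn.edist_le f (Set.left_mem_Icc.2 huv) (Set.right_mem_Icc.2 huv)
    have hf0 : f (2 * Real.pi) = f 0 := by simpa using hper 0
    have h2 : edist (f u) (f v) ≤ eVariationOn f (Set.Icc 0 u)
        + eVariationOn f (Set.Icc v (2 * Real.pi)) := by
      calc edist (f u) (f v) ≤ edist (f u) (f 0) + edist (f 0) (f v) := edist_triangle _ _ _
        _ = edist (f u) (f 0) + edist (f (2 * Real.pi)) (f v) := by rw [hf0]
        _ ≤ eVariationOn f (Set.Icc 0 u) + eVariationOn f (Set.Icc v (2 * Real.pi)) := by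
            gcongr
            · exact eVariationOn.edist_le f (Set.right_mem_Icc.2 hu.1) (Set.left_mem_Icc.2 hu.1)
            · exact eVariationOn.edist_le f (Set.right_mem_Icc.2 hv.2) (Set.left_mem_Icc.2 hv.2)
    have hsum : edist (f u) (f v) + edist (f u) (f v)
        ≤ eVariationOn f (Set.Icc 0 (2 * Real.pi)) := by
      calc edist (f u) (f v) + edist (f u) (f v)
          ≤ eVariationOn f (Set.Icc u v) +
            (eVariationOn f (Set.Icc 0 u) + eVariationOn f (Set.Icc v (2 * Real.pi))) :=
            add_le_add h1 h2
        _ = (eVariationOn f (Set.Icc 0 u) + eVariationOn f (Set.Icc u v))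
            + eVariationOn f (Set.Icc v (2 * Real.pi)) := by ring
        _ = _ := by rw [add1, add2]
    -- pass to reals
    have hfin : eVariationOn f (Set.Icc 0 (2 * Real.pi)) ≠ ⊤ := hbv
    have hd : edist (f u) (f v) ≠ ⊤ := edist_ne_top _ _
    have := ENNReal.toReal_mono hfin hsum
    rw [ENNReal.toReal_add hd hd] at this
    have hdist : (edist (f u) (f v)).toReal = |f u - f v| := by
      rw [edist_dist, ENNReal.toReal_ofReal dist_nonneg, Real.dist_eq]
    rw [hdist] at this
    linarith
  obtain ⟨s₀, hs₀, hfs⟩ := BVIB_reduce hper s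
  obtain ⟨t₀, ht₀, hft⟩ := BVIB_reduce hper t
  rw [hfs, hft]
  have hs₀' : s₀ ∈ Set.Icc 0 (2 * Real.pi) := ⟨hs₀.1, hs₀.2.le⟩
  have ht₀' : t₀ ∈ Set.Icc 0 (2 * Real.pi) := ⟨ht₀.1, ht₀.2.le⟩
  rcases le_total s₀ t₀ with h | h
  · exact key s₀ t₀ hs₀' ht₀' h
  · rw [abs_sub_comm]; exact key t₀ s₀ ht₀' hs₀' h

lemma BVIB_prim {g : ℝ → ℝ} {K : ℝ}
    (hgi : ∀ x y : ℝ, IntervalIntegrable g volume x y)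
    (hgP : Function.Periodic g (2 * Real.pi))
    (hg0 : (∫ t in (0:ℝ)..(2 * Real.pi), g t) = 0)
    (hK : ∀ t, |g t| ≤ K) (t : ℝ) :
    |(∫ u in (0:ℝ)..t, g u) -
      1 / (2 * Real.pi) * ∫ s in (0:ℝ)..(2 * Real.pi), (∫ u in (0:ℝ)..s, g u)| ≤
      Real.pi * K / 2 := by
  have hT : (0:ℝ) < 2 * Real.pi := by positivity
  set G : ℝ → ℝ := fun x => ∫ u in (0:ℝ)..x, g u with hG
  have hGcont : Continuous G := intervalIntegral.continuous_primitive hgi 0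
  have hGlip : ∀ x y : ℝ, |G x - G y| ≤ K * |x - y| := by
    intro x y
    have h1 : G x - G y = ∫ u in y..x, g u :=
      intervalIntegral.integral_interval_sub_left (hgi 0 x) (hgi 0 y)
    rw [h1, ← Real.norm_eq_abs]
    exact intervalIntegral.norm_integral_le_of_norm_le_const fun u _ => by
      rw [Real.norm_eq_abs]; exact hK u
  have hGper : Function.Periodic G (2 * Real.pi) := by
    intro x
    have h2 : (∫ u in x..(x + 2 * Real.pi), g u) = ∫ u in (0:ℝ)..(0 + 2 * Real.pi), g u :=
      hgP.intervalIntegral_add_eq x 0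
    have h3 : G (x + 2 * Real.pi) = G x + ∫ u in x..(x + 2 * Real.pi), g u :=
      (intervalIntegral.integral_add_adjacent_intervals (hgi 0 x) (hgi x _)).symm
    rw [h3, h2]
    simp [hg0]
  set c : ℝ := 1 / (2 * Real.pi) * ∫ s in (0:ℝ)..(2 * Real.pi), G s with hc
  have hshift : (∫ s in (t - Real.pi)..(t + Real.pi), G s) = ∫ s in (0:ℝ)..(2 * Real.pi), G s := by
    have := hGper.intervalIntegral_add_eq (t - Real.pi) 0
    have e1 : t - Real.pi + 2 * Real.pi = t + Real.pi := by ring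
    rw [e1] at this
    simpa using this
  have hGint : ∀ x y : ℝ, IntervalIntegrable G volume x y := fun x y =>
    hGcont.intervalIntegrable x y
  have habs : IntervalIntegrable (fun s => |G t - G s|) volume (t - Real.pi) (t + Real.pi) :=
    ((continuous_const.sub hGcont).abs).intervalIntegrable _ _
  have key : (∫ s in (t - Real.pi)..(t + Real.pi), (G t - G s)) = 2 * Real.pi * (G t - c) := by
    rw [intervalIntegral.integral_sub (intervalIntegrable_const) (hGint _ _),
      intervalIntegral.integral_const, hshift, hc]
    have : (t + Real.pi - (t - Real.pi)) = 2 * Real.pi := by ring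
    rw [this]
    field_simp
    ring
  have hord : t - Real.pi ≤ t + Real.pi := by linarith [Real.pi_pos]
  have step1 : |∫ s in (t - Real.pi)..(t + Real.pi), (G t - G s)| ≤
      ∫ s in (t - Real.pi)..(t + Real.pi), |G t - G s| :=
    intervalIntegral.abs_integral_le_integral_abs hord
  have step2 : (∫ s in (t - Real.pi)..(t + Real.pi), |G t - G s|) ≤
      ∫ s in (t - Real.pi)..(t + Real.pi), K * |s - t| := by
    apply intervalIntegral.integral_mono_on hord habs
      (((continuous_const.mul ((continuous_id.sub continuous_const).abs)).intervalIntegrable _ _))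
    intro x _
    calc |G t - G x| ≤ K * |t - x| := hGlip t x
      _ = K * |x - t| := by rw [abs_sub_comm]
  have step3 : (∫ s in (t - Real.pi)..(t + Real.pi), K * |s - t|) = K * Real.pi ^ 2 := by
    rw [intervalIntegral.integral_const_mul]
    congr 1
    have h4 : (∫ s in (t - Real.pi)..(t + Real.pi), |s - t|) =
        ∫ u in (-Real.pi)..Real.pi, |u| := by
      have h5 := intervalIntegral.integral_comp_sub_right
        (a := t - Real.pi) (b := t + Real.pi) (fun u => |u|) t
      have e2 : t - Real.pi - t = -Real.pi := by ring
      have e3 : t + Real.pi - t = Real.pi := by ring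
      rw [e2, e3] at h5
      exact h5
    rw [h4]
    have hsplit : (∫ u in (-Real.pi)..(Real.pi : ℝ), |u|) =
        (∫ u in (-Real.pi)..(0:ℝ), |u|) + ∫ u in (0:ℝ)..Real.pi, |u| :=
      (intervalIntegral.integral_add_adjacent_intervals
        ((continuous_abs).intervalIntegrable _ _) ((continuous_abs).intervalIntegrable _ _)).symm
    have hneg : (∫ u in (-Real.pi)..(0:ℝ), |u|) = Real.pi ^ 2 / 2 := by
      have : (∫ u in (-Real.pi)..(0:ℝ), |u|) = ∫ u in (-Real.pi)..(0:ℝ), -u := by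
        apply intervalIntegral.integral_congr
        intro x hx
        rw [Set.uIcc_of_le (by linarith [Real.pi_pos] : -Real.pi ≤ (0:ℝ))] at hx
        exact abs_of_nonpos hx.2
      rw [this, intervalIntegral.integral_neg, integral_id]
      ring
    have hpos : (∫ u in (0:ℝ)..Real.pi, |u|) = Real.pi ^ 2 / 2 := by
      have : (∫ u in (0:ℝ)..Real.pi, |u|) = ∫ u in (0:ℝ)..Real.pi, u := by
        apply intervalIntegral.integral_congr
        intro x hx
        rw [Set.uIcc_of_le Real.pi_pos.le] at hx
        exact abs_of_nonneg hx.1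
      rw [this, integral_id]
      ring
    rw [hsplit, hneg, hpos]
    ring
  have : |2 * Real.pi * (G t - c)| ≤ K * Real.pi ^ 2 := by
    rw [← key]
    exact step1.trans (step2.trans_eq step3)
  rw [abs_mul, abs_of_pos hT] at this
  have hpi := Real.pi_pos
  calc |G t - c| = (2 * Real.pi * |G t - c|) / (2 * Real.pi) := by field_simp
    _ ≤ (K * Real.pi ^ 2) / (2 * Real.pi) := by gcongr
    _ = Real.pi * K / 2 := by field_simp

lemma BVIB_cont {f : ℝ → ℝ} (hper : ∀ t : ℝ, f (t + 2 * Real.pi) = f t)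
    (hbv : BoundedVariationOn f (Set.Icc 0 (2 * Real.pi))) :
    ∃ D : Set ℝ, D.Countable ∧ ∀ x ∉ D, ContinuousAt f x := by
  have hT : (0:ℝ) < 2 * Real.pi := by positivity
  have hP : Function.Periodic f (2 * Real.pi) := hper
  obtain ⟨p, q, hp, hq, hpq⟩ :=
    hbv.locallyBoundedVariationOn.exists_monotoneOn_sub_monotoneOn
  set proj : ℝ → ℝ := fun x => max 0 (min x (2 * Real.pi)) with hproj
  have hprojmem : ∀ x, proj x ∈ Set.Icc 0 (2 * Real.pi) := by
    intro x
    refine ⟨le_max_left _ _, ?_⟩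
    exact max_le hT.le (min_le_right _ _)
  have hprojmono : Monotone proj := fun x y hxy => by
    dsimp [proj]; gcongr
  have hprojid : ∀ x ∈ Set.Ioo 0 (2 * Real.pi), proj x = x := by
    intro x hx
    dsimp [proj]
    rw [min_eq_left hx.2.le, max_eq_right hx.1.le]
  have hpmono : Monotone (p ∘ proj) := fun x y hxy =>
    hp (hprojmem x) (hprojmem y) (hprojmono hxy)
  have hqmono : Monotone (q ∘ proj) := fun x y hxy =>
    hq (hprojmem x) (hprojmem y) (hprojmono hxy)
  set D₀ : Set ℝ := {x | ¬ContinuousAt (p ∘ proj) x} ∪ {x | ¬ContinuousAt (q ∘ proj) x}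
    ∪ {0, 2 * Real.pi} with hD₀
  have hD₀c : D₀.Countable :=
    ((hpmono.countable_not_continuousAt.union hqmono.countable_not_continuousAt).union
      ((Set.countable_singleton _).insert _))
  set D : Set ℝ := ⋃ k : ℤ, (fun y => y + k * (2 * Real.pi)) '' D₀ with hD
  refine ⟨D, Set.countable_iUnion (fun k => hD₀c.image _), ?_⟩
  intro x hx
  set k : ℤ := ⌊x / (2 * Real.pi)⌋ with hk
  set y : ℝ := x - k * (2 * Real.pi) with hy
  have hy0 : 0 ≤ y := Int.sub_floor_div_mul_nonneg x hT
  have hy2 : y < 2 * Real.pi := Int.sub_floor_div_mul_lt x hT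
  have hynot : y ∉ D₀ := by
    intro hmem
    apply hx
    refine Set.mem_iUnion.2 ⟨k, ⟨y, hmem, by dsimp; rw [hy]; ring⟩⟩
  have hyne0 : y ≠ 0 := by
    intro h0
    apply hynot
    rw [hD₀, h0]
    right; left; rfl
  have hyIoo : y ∈ Set.Ioo 0 (2 * Real.pi) := ⟨lt_of_le_of_ne hy0 (Ne.symm hyne0), hy2⟩
  have hcp : ContinuousAt (p ∘ proj) y := by
    by_contra h
    exact hynot (Or.inl (Or.inl h))
  have hcq : ContinuousAt (q ∘ proj) y := by
    by_contra h
    exact hynot (Or.inl (Or.inr h))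
  have hfy : ContinuousAt f y := by
    have hcs : ContinuousAt (fun z => (p ∘ proj) z - (q ∘ proj) z) y := hcp.sub hcq
    apply hcs.congr
    have hmemnhds : Set.Ioo (0:ℝ) (2 * Real.pi) ∈ nhds y := isOpen_Ioo.mem_nhds hyIoo
    filter_upwards [hmemnhds] with z hz
    have := hprojid z hz
    simp only [Function.comp_apply, this, hpq]
    simp [hpq]
  -- transfer along periodicity
  have hfeq : f = fun z => f (z - k * (2 * Real.pi)) := by
    funext z
    exact (hP.sub_int_mul_eq k).symm
  rw [hfeq]
  have : ContinuousAt (fun z : ℝ => z - k * (2 * Real.pi)) x :=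
    (continuous_sub_right _).continuousAt
  have hyx : x - k * (2 * Real.pi) = y := by rw [hy]
  exact ContinuousAt.comp (by rw [hyx]; exact hfy) this



/-- For a `2π`-periodic function `f` of bounded variation on `[0, 2π]` with total
variation `V` and mean value `f̄`, and `0 < a < b`,
`|∫_a^b (f(t) − f̄)/t dt| ≤ (π/2) V / a`. -/
theorem bounded_variation_integral_bound (f : ℝ → ℝ)
    (hper : ∀ t : ℝ, f (t + 2 * Real.pi) = f t)
    (hbv : BoundedVariationOn f (Set.Icc 0 (2 * Real.pi)))
    (V fbar : ℝ)
    (hV : V = (eVariationOn f (Set.Icc 0 (2 * Real.pi))).toReal)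
    (hfbar : fbar = 1 / (2 * Real.pi) * ∫ t in (0:ℝ)..(2 * Real.pi), f t)
    (a b : ℝ) (ha : 0 < a) (hab : a < b) :
    |∫ t in a..b, (f t - fbar) * (1 / t)| ≤ Real.pi / 2 * V / a := by
  have hT : (0:ℝ) < 2 * Real.pi := by positivity
  have hpi := Real.pi_pos
  have hVnn : 0 ≤ V := hV ▸ ENNReal.toReal_nonneg
  set g : ℝ → ℝ := fun t => f t - fbar with hg
  have hfi := BVIB_integrable hper hbv
  have hgi : ∀ x y : ℝ, IntervalIntegrable g volume x y := fun x y =>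
    (hfi x y).sub intervalIntegrable_const
  have hgP : Function.Periodic g (2 * Real.pi) := fun x => by simp [hg, hper x]
  have hg0 : (∫ t in (0:ℝ)..(2 * Real.pi), g t) = 0 := by
    rw [hg, intervalIntegral.integral_sub (hfi 0 _) intervalIntegrable_const,
      intervalIntegral.integral_const]
    rw [hfbar]
    simp only [smul_eq_mul, sub_zero]
    field_simp
    ring
  -- pointwise bound |g t| ≤ V / 2
  have hK : ∀ t, |g t| ≤ V / 2 := by
    intro t
    have h1 : (∫ u in (0:ℝ)..(2 * Real.pi), (f t - f u)) = 2 * Real.pi * g t := by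
      rw [intervalIntegral.integral_sub intervalIntegrable_const (hfi 0 _),
        intervalIntegral.integral_const, hg]
      dsimp only
      rw [hfbar]
      field_simp
      ring
    have h2 : |∫ u in (0:ℝ)..(2 * Real.pi), (f t - f u)| ≤ V / 2 * |2 * Real.pi - 0| := by
      rw [← Real.norm_eq_abs]
      refine intervalIntegral.norm_integral_le_of_norm_le_const fun u _ => ?_
      rw [Real.norm_eq_abs, hV]
      exact BVIB_osc hper hbv t u
    rw [h1, abs_mul, abs_of_pos hT] at h2
    rw [sub_zero, abs_of_pos hT] at h2
    nlinarith
  set G : ℝ → ℝ := fun x => ∫ u in (0:ℝ)..x, g u with hGdef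
  set c : ℝ := 1 / (2 * Real.pi) * ∫ s in (0:ℝ)..(2 * Real.pi), G s with hcdef
  set M : ℝ := Real.pi * (V / 2) / 2 with hMdef
  have hM : ∀ t, |G t - c| ≤ M := fun t => BVIB_prim hgi hgP hg0 hK t
  have hMnn : 0 ≤ M := le_trans (abs_nonneg _) (hM 0)
  have hGcont : Continuous G := intervalIntegral.continuous_primitive hgi 0
  -- countable set of discontinuities
  obtain ⟨D, hDc, hDcont⟩ := BVIB_cont hper hbv
  -- the functions for FTC
  set Φ : ℝ → ℝ := fun x => (G x - c) * x⁻¹ with hΦ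
  set φ : ℝ → ℝ := fun t => g t * t⁻¹ - (G t - c) * (t ^ 2)⁻¹ with hφ
  have hne : ∀ x ∈ Set.uIcc a b, x ≠ 0 := by
    intro x hx
    rw [Set.uIcc_of_le hab.le] at hx
    exact ne_of_gt (lt_of_lt_of_le ha hx.1)
  have hinvcont : ContinuousOn (fun x : ℝ => x⁻¹) (Set.uIcc a b) :=
    ContinuousOn.inv₀ continuousOn_id hne
  have hinv2cont : ContinuousOn (fun x : ℝ => (x ^ 2)⁻¹) (Set.uIcc a b) :=
    ContinuousOn.inv₀ (continuousOn_pow 2) fun x hx => pow_ne_zero 2 (hne x hx)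
  have hint1 : IntervalIntegrable (fun t => g t * t⁻¹) volume a b :=
    (hgi a b).mul_continuousOn hinvcont
  have hint2 : IntervalIntegrable (fun t => (G t - c) * (t ^ 2)⁻¹) volume a b :=
    (((hGcont.sub continuous_const).continuousOn).mul hinv2cont).intervalIntegrable
  have hintφ : IntervalIntegrable φ volume a b := hint1.sub hint2
  have hΦcont : ContinuousOn Φ (Set.Icc a b) := by
    apply ContinuousOn.mul ((hGcont.sub continuous_const).continuousOn)
    apply (hinvcont.mono ?_)
    rw [Set.uIcc_of_le hab.le]
  have hderiv : ∀ x ∈ Set.Ioo a b \ D, HasDerivAt Φ (φ x) x := by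
    intro x hx
    have hx0 : x ≠ 0 := ne_of_gt (lt_trans ha hx.1.1)
    have hcg : ContinuousAt g x := (hDcont x hx.2).sub continuousAt_const
    have hmeas : StronglyMeasurableAtFilter g (nhds x) volume := by
      refine ⟨Set.Ioo (x - 1) (x + 1), isOpen_Ioo.mem_nhds ⟨by linarith, by linarith⟩, ?_⟩
      exact (((hgi (x - 1) (x + 1)).1.mono_set Set.Ioo_subset_Ioc_self).aestronglyMeasurable)
    have hGd : HasDerivAt G (g x) x :=
      intervalIntegral.integral_hasDerivAt_right (hgi 0 x) hmeas hcg
    have hinvd : HasDerivAt (fun y : ℝ => y⁻¹) (-(x ^ 2)⁻¹) x := hasDerivAt_inv hx0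
    have := (hGd.sub_const c).mul hinvd
    have e : φ x = g x * x⁻¹ + (G x - c) * -(x ^ 2)⁻¹ := by
      rw [hφ]
      dsimp only
      ring
    rw [e]; exact this
  have hftc : (∫ x in a..b, φ x) = Φ b - Φ a :=
    MeasureTheory.integral_eq_of_hasDerivAt_off_countable_of_le Φ φ hab.le hDc hΦcont
      hderiv hintφ
  have hsplit : (∫ x in a..b, φ x)
      = (∫ t in a..b, g t * t⁻¹) - ∫ t in a..b, (G t - c) * (t ^ 2)⁻¹ := by
    rw [hφ]
    exact intervalIntegral.integral_sub hint1 hint2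
  have hmain : (∫ t in a..b, g t * t⁻¹)
      = Φ b - Φ a + ∫ t in a..b, (G t - c) * (t ^ 2)⁻¹ := by
    rw [← hftc, hsplit]; ring
  -- compute ∫ (t^2)⁻¹
  have hinvsq : (∫ t in a..b, (t ^ 2)⁻¹) = a⁻¹ - b⁻¹ := by
    have hd : ∀ x ∈ Set.uIcc a b, HasDerivAt (fun y : ℝ => -y⁻¹) ((x ^ 2)⁻¹) x := by
      intro x hx
      have h := (hasDerivAt_inv (hne x hx)).neg; rw [neg_neg] at h; exact h
    have hi : IntervalIntegrable (fun t : ℝ => (t ^ 2)⁻¹) volume a b :=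
      hinv2cont.intervalIntegrable
    rw [intervalIntegral.integral_eq_sub_of_hasDerivAt hd hi]
    ring
  -- bounds
  have hbpos : 0 < b := lt_trans ha hab
  have hbd3 : |∫ t in a..b, (G t - c) * (t ^ 2)⁻¹| ≤ M * (a⁻¹ - b⁻¹) := by
    have h1 : |∫ t in a..b, (G t - c) * (t ^ 2)⁻¹| ≤ ∫ t in a..b, |(G t - c) * (t ^ 2)⁻¹| :=
      intervalIntegral.abs_integral_le_integral_abs hab.le
    have h2 : (∫ t in a..b, |(G t - c) * (t ^ 2)⁻¹|) ≤ ∫ t in a..b, M * (t ^ 2)⁻¹ := by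
      apply intervalIntegral.integral_mono_on hab.le
        (hint2.abs)
        ((continuousOn_const.mul hinv2cont).intervalIntegrable)
      intro x hx
      have hx2 : (0:ℝ) < x ^ 2 := by
        have : 0 < x := lt_of_lt_of_le ha hx.1
        positivity
      rw [abs_mul, abs_of_pos (inv_pos.2 hx2)]
      exact mul_le_mul_of_nonneg_right (hM x) (inv_nonneg.2 hx2.le)
    have h3 : (∫ t in a..b, M * (t ^ 2)⁻¹) = M * (a⁻¹ - b⁻¹) := by
      rw [intervalIntegral.integral_const_mul, hinvsq]
    linarith
  have hΦb : |Φ b| ≤ M * b⁻¹ := by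
    rw [hΦ]
    dsimp only
    rw [abs_mul, abs_of_pos (inv_pos.2 hbpos)]
    exact mul_le_mul_of_nonneg_right (hM b) (inv_nonneg.2 hbpos.le)
  have hΦa : |Φ a| ≤ M * a⁻¹ := by
    rw [hΦ]
    dsimp only
    rw [abs_mul, abs_of_pos (inv_pos.2 ha)]
    exact mul_le_mul_of_nonneg_right (hM a) (inv_nonneg.2 ha.le)
  have hgoal : (∫ t in a..b, (f t - fbar) * (1 / t)) = ∫ t in a..b, g t * t⁻¹ := by
    apply intervalIntegral.integral_congr
    intro x _
    simp [one_div, hg]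
  rw [hgoal, hmain]
  have hfin : |Φ b - Φ a + ∫ t in a..b, (G t - c) * (t ^ 2)⁻¹|
      ≤ M * b⁻¹ + M * a⁻¹ + M * (a⁻¹ - b⁻¹) := by
    calc |Φ b - Φ a + ∫ t in a..b, (G t - c) * (t ^ 2)⁻¹|
        ≤ |Φ b| + |Φ a| + |∫ t in a..b, (G t - c) * (t ^ 2)⁻¹| := by
          have := abs_add_le (Φ b - Φ a) (∫ t in a..b, (G t - c) * (t ^ 2)⁻¹)
          have h2 := abs_sub (Φ b) (Φ a)
          linarith
      _ ≤ M * b⁻¹ + M * a⁻¹ + M * (a⁻¹ - b⁻¹) := by linarith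
  have hcalc : M * b⁻¹ + M * a⁻¹ + M * (a⁻¹ - b⁻¹) = Real.pi / 2 * V / a := by
    rw [hMdef]
    field_simp
    ring
  linarith
end

section
/- Let g : ℕ → ℝ be completely multiplicative with |g(n)| ≤ 1 for all n, and let F(s) := Σ_{n=1}^∞ g(n)·n^{−s}. Then for every complex s with Re(s) > 1, |F(s)| ≤ exp(γ − M)·exp( Re( Σ_{p prime} g(p)/p^{s} ) ), where γ is the Euler–Mascheroni constant and M is the Meissel–Mertens constant. -/
open Real Complex

/-- Key pointwise estimate: for `|z| ≤ r < 1`,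
`-log |1 - z| ≤ Re z + (-log (1 - r) - r)`. -/
lemma keyA {z : ℂ} {r : ℝ} (hzr : ‖z‖ ≤ r) (hr : r < 1) :
    -Real.log (‖1 - z‖) ≤ z.re + (-Real.log (1 - r) - r) := by
  have hr0 : 0 ≤ r := (norm_nonneg z).trans hzr
  have hz1 : ‖z‖ < 1 := lt_of_le_of_lt hzr hr
  have hA : HasSum (fun n : ℕ => (z ^ n / n).re) (-Real.log (‖1 - z‖)) := by
    have h := Complex.hasSum_re (Complex.hasSum_taylorSeries_neg_log hz1)
    simpa [Complex.log_re] using h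
  have hB : HasSum (fun n : ℕ => r ^ n / n) (-Real.log (1 - r)) := by
    have hr1 : ‖(r : ℂ)‖ < 1 := by
      rwa [Complex.norm_real, Real.norm_eq_abs, _root_.abs_of_nonneg hr0]
    have h := Complex.hasSum_re (Complex.hasSum_taylorSeries_neg_log hr1)
    have e1 : (fun n : ℕ => (((r : ℂ)) ^ n / (n : ℂ)).re) = fun n : ℕ => r ^ n / n := by
      funext n
      have : ((r : ℂ)) ^ n / (n : ℂ) = ((r ^ n / n : ℝ) : ℂ) := by push_cast; ring
      rw [this, Complex.ofReal_re]
    have e2 : (-Complex.log (1 - (r : ℂ))).re = -Real.log (1 - r) := by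
      have : (1 : ℂ) - (r : ℂ) = ((1 - r : ℝ) : ℂ) := by push_cast; ring
      rw [Complex.neg_re, this, Complex.log_re, Complex.norm_real, Real.norm_eq_abs,
        abs_of_pos (by linarith)]
    rw [e1, e2] at h
    exact h
  have hC : HasSum (Function.update (fun n : ℕ => r ^ n / n) 1 z.re)
      (z.re - r ^ 1 / (1 : ℕ) + -Real.log (1 - r)) := hB.update 1 z.re
  have hle : ∀ n : ℕ, (z ^ n / n).re ≤ Function.update (fun n : ℕ => r ^ n / n) 1 z.re n := by
    intro n
    rcases eq_or_ne n 1 with rfl | hn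
    · simp
    · rw [Function.update_of_ne hn]
      refine (Complex.re_le_norm _).trans ?_
      rw [norm_div, norm_pow, Complex.norm_natCast]
      gcongr
  have := hasSum_le hle hA hC
  simp only [pow_one, Nat.cast_one, div_one] at this
  linarith

/-- For `|z| ≤ 1/2`, `|log |1 - z|| ≤ 2 |z|`. -/
lemma keyB {z : ℂ} (h : ‖z‖ ≤ 1 / 2) :
    |Real.log (‖1 - z‖)| ≤ 2 * ‖z‖ := by
  set a := ‖z‖ with ha
  have ha0 : 0 ≤ a := norm_nonneg z
  have h1 : 1 - a ≤ ‖1 - z‖ := by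
    have := norm_add_le (1 - z) z
    simp only [sub_add_cancel, norm_one] at this
    linarith
  have h2 : ‖1 - z‖ ≤ 1 + a := by
    have := norm_sub_le 1 z
    simpa using this
  have hpos : (0 : ℝ) < 1 - a := by linarith
  have hpos' : 0 < ‖1 - z‖ := lt_of_lt_of_le hpos h1
  rw [abs_le]
  constructor
  · -- lower bound
    have hl1 : Real.log (1 - a) ≤ Real.log (‖1 - z‖) :=
      Real.log_le_log hpos h1
    have hl2 : Real.log (1 - a)⁻¹ ≤ (1 - a)⁻¹ - 1 :=
      Real.log_le_sub_one_of_pos (inv_pos.mpr hpos)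
    rw [Real.log_inv] at hl2
    have hl3 : (1 - a)⁻¹ - 1 ≤ 2 * a := by
      rw [inv_eq_one_div, div_sub' hpos.ne', div_le_iff₀ hpos]
      nlinarith
    linarith
  · have hu1 : Real.log (‖1 - z‖) ≤ Real.log (1 + a) :=
      Real.log_le_log hpos' h2
    have hu2 : Real.log (1 + a) ≤ (1 + a) - 1 :=
      Real.log_le_sub_one_of_pos (by linarith)
    linarith

/-- For a real completely multiplicative `g` with `|g| ≤ 1` and
`F(s) = ∑_{n ≥ 1} g(n) n^{−s}`, for `Re(s) > 1`:
`|F(s)| ≤ exp(γ − M) · exp(Re ∑_p g(p)/p^s)`, where `γ` is the Euler–Mascheroni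
constant and `M` the Meissel–Mertens constant. -/
theorem F_bound (M : ℝ)
    (hM : M = Real.eulerMascheroniConstant +
      ∑' p : {p : ℕ // p.Prime}, (Real.log (1 - 1 / (p : ℝ)) + 1 / (p : ℝ)))
    (g : ℕ → ℝ) (hg1 : g 1 = 1) (hgmul : ∀ m n : ℕ, g (m * n) = g m * g n)
    (hgle : ∀ n : ℕ, |g n| ≤ 1)
    (s : ℂ) (hs : 1 < s.re) :
    ‖∑' n : ℕ, (g n : ℂ) / (n : ℂ) ^ s‖ ≤
      Real.exp (Real.eulerMascheroniConstant - M) *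
        Real.exp ((∑' p : {p : ℕ // p.Prime}, (g p : ℂ) / (p : ℂ) ^ s).re) := by
  have hs0 : s ≠ 0 := by
    intro h; rw [h] at hs; simp at hs; linarith
  -- the completely multiplicative function `f`
  set f : ℕ →*₀ ℂ :=
    { toFun := fun n => (g n : ℂ) / (n : ℂ) ^ s
      map_zero' := by simp [Complex.zero_cpow hs0]
      map_one' := by simp [hg1]
      map_mul' := by
        intro m n
        rcases Nat.eq_zero_or_pos m with rfl | hm
        · simp [Complex.zero_cpow hs0, hgmul]
        rcases Nat.eq_zero_or_pos n with rfl | hn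
        · simp [Complex.zero_cpow hs0, hgmul]
        have key : ((m * n : ℕ) : ℂ) ^ s = (m : ℂ) ^ s * (n : ℂ) ^ s := by
          have h1 : ((m * n : ℕ) : ℂ) = ((m : ℝ) : ℂ) * ((n : ℝ) : ℂ) := by push_cast; ring
          rw [h1, Complex.mul_cpow_ofReal_nonneg (Nat.cast_nonneg m) (Nat.cast_nonneg n)]
          norm_cast
        rw [key, hgmul]
        push_cast
        rw [div_mul_div_comm] } with hf
  have hfapp : ∀ n : ℕ, f n = (g n : ℂ) / (n : ℂ) ^ s := fun n => rfl
  -- norm bounds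
  have habs : ∀ n : ℕ, 0 < n → ‖f n‖ ≤ ((n : ℝ)) ^ (-s.re) := by
    intro n hn
    have hn0 : (0 : ℝ) < n := by exact_mod_cast hn
    rw [hfapp, norm_div, Complex.norm_real, Real.norm_eq_abs]
    have : ‖(n : ℂ) ^ s‖ = (n : ℝ) ^ s.re := by
      rw [show ((n : ℕ) : ℂ) = (((n : ℝ)) : ℂ) by push_cast; rfl]
      exact Complex.norm_cpow_eq_rpow_re_of_pos hn0 s
    rw [this, Real.rpow_neg hn0.le, inv_eq_one_div]
    rw [div_le_div_iff₀ (by positivity) (by positivity)]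
    nlinarith [hgle n, Real.rpow_pos_of_pos hn0 s.re, abs_nonneg (g n)]
  have hsummable : Summable (fun n : ℕ => ‖f n‖) := by
    refine Summable.of_nonneg_of_le (fun n => norm_nonneg _)
      (fun n => ?_) (Real.summable_nat_rpow.mpr (by linarith) : Summable fun n : ℕ => (n : ℝ) ^ (-s.re))
    rcases Nat.eq_zero_or_pos n with rfl | hn
    · simp only [hfapp, Nat.cast_zero, Complex.zero_cpow hs0, div_zero, norm_zero]
      exact Real.rpow_nonneg (by norm_num) _
    · exact habs n hn
  -- Euler product
  have hEuler : HasProd (fun p : Nat.Primes => (1 - f p)⁻¹)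
      (∑' n : ℕ, (g n : ℂ) / (n : ℂ) ^ s) :=
    EulerProduct.eulerProduct_completely_multiplicative_hasProd hsummable
  -- basic facts about primes
  have hp2 : ∀ p : Nat.Primes, (2 : ℝ) ≤ (p : ℕ) := by
    intro p; exact_mod_cast p.prop.two_le
  have hppos : ∀ p : Nat.Primes, (0 : ℝ) < (p : ℕ) := fun p => by linarith [hp2 p]
  have habsp : ∀ p : Nat.Primes, ‖f p‖ ≤ ((p : ℕ) : ℝ) ^ (-s.re) :=
    fun p => habs p p.prop.pos
  have hple : ∀ p : Nat.Primes, ((p : ℕ) : ℝ) ^ (-s.re) ≤ 1 / (p : ℕ) := by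
    intro p
    rw [Real.rpow_neg (hppos p).le, inv_eq_one_div]
    apply one_div_le_one_div_of_le (hppos p)
    calc ((p : ℕ) : ℝ) = ((p : ℕ) : ℝ) ^ (1 : ℝ) := (Real.rpow_one _).symm
      _ ≤ ((p : ℕ) : ℝ) ^ s.re :=
        Real.rpow_le_rpow_of_exponent_le (by linarith [hp2 p]) (by linarith)
  have hphalf : ∀ p : Nat.Primes, (1 : ℝ) / (p : ℕ) ≤ 1 / 2 := by
    intro p
    exact one_div_le_one_div_of_le two_pos (hp2 p)
  have habshalf : ∀ p : Nat.Primes, ‖f p‖ ≤ 1 / 2 :=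
    fun p => ((habsp p).trans (hple p)).trans (hphalf p)
  -- `t p = -log |1 - f p|`
  set t : Nat.Primes → ℝ := fun p => -Real.log (‖1 - f p‖) with ht
  -- summability of `t`
  have hsum_primes : Summable (fun p : Nat.Primes => ((p : ℕ) : ℝ) ^ (-s.re)) :=
    Nat.Primes.summable_rpow.mpr (by linarith)
  have hsum_t : Summable t := by
    apply Summable.of_abs
    refine Summable.of_nonneg_of_le (fun p => abs_nonneg _) (fun p => ?_)
      ((hsum_primes.mul_left 2))
    rw [ht, abs_neg]
    calc |Real.log (‖1 - f p‖)| ≤ 2 * ‖f p‖ := keyB (habshalf p)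
      _ ≤ 2 * ((p : ℕ) : ℝ) ^ (-s.re) := by linarith [habsp p]
  -- summability of `f` over primes, and of its real parts
  have hsum_f : Summable (fun p : Nat.Primes => f p) := by
    apply Summable.of_norm
    refine Summable.of_nonneg_of_le (fun p => norm_nonneg _) (fun p => habsp p) hsum_primes
  have hsum_re : Summable (fun p : Nat.Primes => (f p).re) :=
    ⟨_, Complex.hasSum_re hsum_f.hasSum⟩
  -- the constant term `c p`
  set c : Nat.Primes → ℝ := fun p => -(Real.log (1 - 1 / ((p : ℕ) : ℝ)) + 1 / ((p : ℕ) : ℝ))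
    with hc
  have hc_bound : ∀ p : Nat.Primes, c p ≤ 2 * (1 / ((p : ℕ) : ℝ)) ^ 2 := by
    intro p
    have hx : |1 / ((p : ℕ) : ℝ)| < 1 := by
      rw [_root_.abs_of_pos (one_div_pos.mpr (hppos p))]
      linarith [hphalf p]
    have h := Real.abs_log_sub_add_sum_range_le hx 1
    simp only [Finset.range_one, Finset.sum_singleton, pow_one, Nat.cast_zero, zero_add,
      Nat.cast_one, div_one] at h
    rw [_root_.abs_of_pos (one_div_pos.mpr (hppos p))] at h
    have h2 : (1 / ((p : ℕ) : ℝ)) ^ 2 / (1 - 1 / ((p : ℕ) : ℝ)) ≤ 2 * (1 / ((p : ℕ) : ℝ)) ^ 2 := by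
      rw [div_le_iff₀ (by linarith [hphalf p])]
      nlinarith [hphalf p, sq_nonneg (1 / ((p : ℕ) : ℝ))]
    calc c p ≤ |Real.log (1 - 1 / ((p : ℕ) : ℝ)) + 1 / ((p : ℕ) : ℝ)| := neg_le_abs _
      _ = |1 / ((p : ℕ) : ℝ) + Real.log (1 - 1 / ((p : ℕ) : ℝ))| := by rw [add_comm]
      _ ≤ _ := h.trans h2
  have hsum_c : Summable c := by
    refine Summable.of_nonneg_of_le (fun p => ?_) hc_bound ?_
    · have hlog := Real.log_le_sub_one_of_pos
        (show (0:ℝ) < 1 - 1 / ((p : ℕ) : ℝ) by linarith [hphalf p])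
      simp only [hc]
      linarith
    · have h1 : Summable (fun n : ℕ => (1 / (n : ℝ)) ^ 2) := by
        simpa [one_div, inv_pow] using
          (Real.summable_one_div_nat_pow (p := 2)).mpr one_lt_two
      exact (h1.subtype _).mul_left 2
  have h_t_le : ∀ p : Nat.Primes, t p ≤ (f p).re + c p := by
    intro p
    have h := keyA (z := f p) (r := 1 / ((p : ℕ) : ℝ)) ((habsp p).trans (hple p))
      (by linarith [hphalf p])
    simp only [ht, hc]
    linarith
  have hsum_rc : Summable (fun p : Nat.Primes => (f p).re + c p) := hsum_re.add hsum_c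
  have hT : ∑' p : Nat.Primes, t p ≤ ∑' p : Nat.Primes, ((f p).re + c p) :=
    Summable.tsum_le_tsum h_t_le hsum_t hsum_rc
  have hsplit : ∑' p : Nat.Primes, ((f p).re + c p)
      = (∑' p : Nat.Primes, (f p).re) + ∑' p : Nat.Primes, c p := Summable.tsum_add hsum_re hsum_c
  have hre : ∑' p : Nat.Primes, (f p).re
      = (∑' p : {p : ℕ // p.Prime}, (g p : ℂ) / (p : ℂ) ^ s).re := by
    have h1 : (∑' p : {p : ℕ // p.Prime}, (g p : ℂ) / (p : ℂ) ^ s)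
        = ∑' p : Nat.Primes, f p := by
      apply tsum_congr
      intro p
      rw [hfapp]
    rw [h1]
    exact (Complex.re_tsum hsum_f).symm
  have hcsum : ∑' p : Nat.Primes, c p = Real.eulerMascheroniConstant - M := by
    have h1 : ∑' p : Nat.Primes, c p
        = -∑' p : Nat.Primes, (Real.log (1 - 1 / ((p : ℕ) : ℝ)) + 1 / ((p : ℕ) : ℝ)) :=
      tsum_neg
    have h2 : ∑' p : Nat.Primes, (Real.log (1 - 1 / ((p : ℕ) : ℝ)) + 1 / ((p : ℕ) : ℝ))
        = ∑' p : {p : ℕ // p.Prime}, (Real.log (1 - 1 / ((p : ℕ) : ℝ)) + 1 / ((p : ℕ) : ℝ)) :=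
      rfl
    rw [h1, h2, hM]
    ring
  have hfactor : ∀ p : Nat.Primes, ‖(1 - f p)⁻¹‖ = Real.exp (t p) := by
    intro p
    have hne : (1 : ℂ) - f p ≠ 0 := by
      intro h0
      have : ‖f p‖ = 1 := by
        have : f p = 1 := by linear_combination -h0
        rw [this, norm_one]
      linarith [habshalf p]
    have hpos : 0 < ‖1 - f p‖ := norm_pos_iff.mpr hne
    rw [norm_inv, ht, Real.exp_neg, Real.exp_log hpos]
  have hEuler' : HasProd (fun p : Nat.Primes => Real.exp (t p))
      (‖∑' n : ℕ, (g n : ℂ) / (n : ℂ) ^ s‖) := by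
    have h := hEuler.map (normHom : ℂ →*₀ ℝ) continuous_norm
    have e : ((normHom : ℂ →*₀ ℝ) ∘ fun p : Nat.Primes => (1 - f p)⁻¹)
        = fun p : Nat.Primes => Real.exp (t p) := by
      funext p
      simp only [Function.comp_apply]
      exact hfactor p
    rwa [e] at h
  have hExp : HasProd (fun p : Nat.Primes => Real.exp (t p))
      (Real.exp (∑' p : Nat.Primes, t p)) := by
    exact hsum_t.hasSum.rexp
  have habsF : ‖∑' n : ℕ, (g n : ℂ) / (n : ℂ) ^ s‖
      = Real.exp (∑' p : Nat.Primes, t p) := hEuler'.unique hExp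
  rw [habsF, ← Real.exp_add]
  apply Real.exp_le_exp.mpr
  linarith [hT, hsplit, hre, hcsum]
end
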